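/- arXiv:2107.01157 — 5 statements merged into one kernel-verified Lean document; each statement's English description precedes it below -/
import Mathlib

section
/- Let G be a finite group with exactly three involutions, not all pairs of which commute. Then either G ≅ S₃, or the power graph of G has a perfect matching. -/
open SimpleGraph

def powerGraph (G : Type*) [Group G] : SimpleGraph G where
  Adj x y := x ≠ y ∧ ((∃ n : ℕ, y ^ n = x) ∨ (∃ n : ℕ, x ^ n = y))
  symm := ⟨fun x y ⟨h, hp⟩ => ⟨h.symm, hp.symm⟩⟩
  loopless := ⟨fun x ⟨h, _⟩ => h rfl⟩

noncomputable def matchingNumber {V : Type*} (Γ : SimpleGraph V) : ℕ :=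
  sSup {n | ∃ M : Γ.Subgraph, M.IsMatching ∧ M.edgeSet.ncard = n}

def hasPerfectMatching {V : Type*} (Γ : SimpleGraph V) : Prop :=
  ∃ M : Γ.Subgraph, M.IsPerfectMatching

namespace Stmt13Aux

variable {G : Type*} [Group G]

lemma conj_orderOf (g x : G) : orderOf (g * x * g⁻¹) = orderOf x := by
  have h : g * x * g⁻¹ = (MulAut.conj g) x := rfl
  rw [h, MulEquiv.orderOf_eq]

/-- Conjugation as a permutation of the set of involutions. -/
def conjPerm (g : G) : Equiv.Perm {x : G // orderOf x = 2} where
  toFun x := ⟨g * x.1 * g⁻¹, by rw [conj_orderOf]; exact x.2⟩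
  invFun x := ⟨g⁻¹ * x.1 * g, by
    have h := conj_orderOf g⁻¹ x.1
    rw [inv_inv] at h
    rw [h]; exact x.2⟩
  left_inv x := by
    ext
    simp [mul_assoc]
  right_inv x := by
    ext
    simp [mul_assoc]

/-- Conjugation action on involutions, as a homomorphism into the permutation group. -/
def conjHom : G →* Equiv.Perm {x : G // orderOf x = 2} where
  toFun := conjPerm
  map_one' := by
    ext x
    simp [conjPerm]
  map_mul' a b := by
    ext x
    simp [conjPerm, mul_assoc]

/-- `Equiv.permCongr` as a `MulEquiv`. -/
def permMulCongr {α β : Type*} (e : α ≃ β) : Equiv.Perm α ≃* Equiv.Perm β :=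
  { Equiv.permCongr e with
    map_mul' := fun σ τ => by
      ext b
      simp [Equiv.permCongr] }

section Basic

variable {s t : G}

lemma sq_one (hs : orderOf s = 2) : s * s = 1 := by
  have h := pow_orderOf_eq_one s
  rwa [hs, pow_two] at h

lemma ne_one (hs : orderOf s = 2) : s ≠ 1 := by
  intro h
  rw [h, orderOf_one] at hs
  exact absurd hs (by norm_num)

lemma inv_self (hs : orderOf s = 2) : s⁻¹ = s :=
  mul_eq_one_iff_inv_eq.mp (sq_one hs)

lemma s_ne_t (hst : s * t ≠ t * s) : s ≠ t := fun h => hst (by rw [h])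

lemma u_ne_one (hs : orderOf s = 2) (ht : orderOf t = 2) (hst : s * t ≠ t * s) :
    s * t * s ≠ 1 := by
  intro h
  rw [mul_assoc] at h
  have h2 : s⁻¹ = t * s := mul_eq_one_iff_inv_eq.mp h
  rw [inv_self hs] at h2
  have h3 : t = 1 := mul_right_cancel (b := s) (by rw [one_mul]; exact h2.symm)
  exact ne_one ht h3

lemma u_sq (hs : orderOf s = 2) (ht : orderOf t = 2) :
    (s * t * s) * (s * t * s) = 1 := by
  have Hs : ∀ x : G, s * (s * x) = x := fun x => by rw [← mul_assoc, sq_one hs, one_mul]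
  have Ht : ∀ x : G, t * (t * x) = x := fun x => by rw [← mul_assoc, sq_one ht, one_mul]
  simp only [mul_assoc, Hs, Ht]
  exact sq_one hs

lemma u_order (hs : orderOf s = 2) (ht : orderOf t = 2) (hst : s * t ≠ t * s) :
    orderOf (s * t * s) = 2 :=
  haveI : Fact (Nat.Prime 2) := ⟨Nat.prime_two⟩
  orderOf_eq_prime (by rw [pow_two]; exact u_sq hs ht) (u_ne_one hs ht hst)

lemma u_ne_s (hs : orderOf s = 2) (ht : orderOf t = 2) (hst : s * t ≠ t * s) :
    s * t * s ≠ s := by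
  intro h
  rw [mul_assoc] at h
  have h2 : t * s = 1 := mul_left_cancel (a := s) (by rw [mul_one]; exact h)
  have h3 : t = s⁻¹ := mul_eq_one_iff_eq_inv.mp h2
  rw [inv_self hs] at h3
  exact s_ne_t hst h3.symm

lemma u_ne_t (hs : orderOf s = 2) (ht : orderOf t = 2) (hst : s * t ≠ t * s) :
    s * t * s ≠ t := by
  intro h
  have h2 : (s * t) * (s * t) = 1 := by
    have e : (s * t) * (s * t) = (s * t * s) * t := by simp only [mul_assoc]
    rw [e, h, sq_one ht]
  have h3 : s * t = t * s := by
    have h4 : (s * t)⁻¹ = s * t := mul_eq_one_iff_inv_eq.mp h2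
    calc s * t = (s * t)⁻¹ := h4.symm
    _ = t⁻¹ * s⁻¹ := mul_inv_rev _ _
    _ = t * s := by rw [inv_self hs, inv_self ht]
  exact hst h3

lemma braid (hs : orderOf s = 2) (ht : orderOf t = 2) (hst : s * t ≠ t * s)
    (hclass : ∀ x : G, orderOf x = 2 → x = s ∨ x = t ∨ x = s * t * s) :
    t * s * t = s * t * s := by
  have hts : t * s ≠ s * t := fun h => hst h.symm
  rcases hclass _ (u_order ht hs hts) with h | h | h
  · exfalso
    have h2 : (t * s) * (t * s) = 1 := by
      have e : (t * s) * (t * s) = (t * s * t) * s := by simp only [mul_assoc]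
      rw [e, h, sq_one hs]
    have h3 : t * s = s * t := by
      have h4 : (t * s)⁻¹ = t * s := mul_eq_one_iff_inv_eq.mp h2
      calc t * s = (t * s)⁻¹ := h4.symm
      _ = s⁻¹ * t⁻¹ := mul_inv_rev _ _
      _ = s * t := by rw [inv_self hs, inv_self ht]
    exact hst h3.symm
  · exfalso
    rw [mul_assoc] at h
    have h2 : s * t = 1 := mul_left_cancel (a := t) (by rw [mul_one]; exact h)
    have h3 : s = t⁻¹ := mul_eq_one_iff_eq_inv.mp h2
    rw [inv_self ht] at h3
    exact s_ne_t hst h3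
  · exact h

end Basic


section Matching

set_option maxHeartbeats 3200000 in
lemma matching_of_z [Fintype G] (s t z : G)
    (hs : orderOf s = 2) (ht : orderOf t = 2) (hst : s * t ≠ t * s)
    (hz1 : z ≠ 1) (hzo : Odd (orderOf z))
    (czs : Commute z s) (czt : Commute z t)
    (hclass : ∀ x : G, orderOf x = 2 → x = s ∨ x = t ∨ x = s * t * s) :
    hasPerfectMatching (powerGraph G) := by
  classical
  -- basic facts
  have hss : s * s = 1 := sq_one hs
  have htt : t * t = 1 := sq_one ht
  have hsinv : s⁻¹ = s := inv_self hs
  have htinv : t⁻¹ = t := inv_self ht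
  have hs1 : s ≠ 1 := ne_one hs
  have ht1 : t ≠ 1 := ne_one ht
  have hsnet : s ≠ t := s_ne_t hst
  have Hs : ∀ x : G, s * (s * x) = x := fun x => by rw [← mul_assoc, hss, one_mul]
  have Ht : ∀ x : G, t * (t * x) = x := fun x => by rw [← mul_assoc, htt, one_mul]
  have hu1 : s * t * s ≠ 1 := u_ne_one hs ht hst
  have hu2 : (s * t * s) * (s * t * s) = 1 := u_sq hs ht
  have huo : orderOf (s * t * s) = 2 := u_order hs ht hst
  have hu_ne_s : s * t * s ≠ s := u_ne_s hs ht hst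
  have hu_ne_t : s * t * s ≠ t := u_ne_t hs ht hst
  have hu' : t * s * t = s * t * s := braid hs ht hst hclass
  -- commuting kit
  have K1 : ∀ w : G, Commute w s → t ≠ w := by
    intro w hw h
    subst h
    exact hst hw.eq.symm
  have K2 : ∀ w : G, Commute w s → s * t * s ≠ w := by
    intro w hw h
    subst h
    have h2 := hw.eq
    simp only [mul_assoc, Hs, hss, mul_one] at h2
    exact hst h2
  have K3 : ∀ w : G, Commute w s → t * s ≠ w := by
    intro w hw h
    subst h
    have h2 := hw.eq
    simp only [mul_assoc, hss, mul_one] at h2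
    exact hu_ne_t (by simp only [mul_assoc]; exact h2.symm)
  have K4 : ∀ w : G, Commute w t → s ≠ w := by
    intro w hw h
    subst h
    exact hst hw.eq
  have K5 : ∀ w : G, Commute w t → s * t * s ≠ w := by
    intro w hw h
    subst h
    have h2 := hw.eq
    have hR : t * (s * t * s) = s * t := by
      have e : t * (s * t * s) = (t * s * t) * s := by simp only [mul_assoc]
      rw [e, hu']
      simp only [mul_assoc, hss, mul_one]
    rw [hR] at h2
    exact hu_ne_s (mul_right_cancel h2)
  -- parity kit
  have hoddvd : ∀ {d q : ℕ}, d ∣ q → Odd q → Odd d := by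
    intro d q h hq
    rcases Nat.even_or_odd d with he | ho
    · exact absurd (even_iff_two_dvd.mpr (he.two_dvd.trans h)) (Nat.not_even_iff_odd.mpr hq)
    · exact ho
  have Hpar : ∀ w v : G, orderOf w = 2 → Odd (orderOf v) → w ≠ v := by
    intro w v hw hv h
    subst h
    rw [hw] at hv
    exact (by decide : ¬ Odd 2) hv
  have hz'o : Odd (orderOf z⁻¹) := by rwa [orderOf_inv]
  have hzzo : Odd (orderOf (z * z)) := hoddvd (by rw [← pow_two]; exact orderOf_pow_dvd 2) hzo
  have hzz'o : Odd (orderOf (z⁻¹ * z⁻¹)) :=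
    hoddvd (by rw [← pow_two]; exact orderOf_pow_dvd 2) hz'o
  -- commute instances
  have cs_sz : Commute (s * z) s := (Commute.refl s).mul_left czs
  have cs_szi : Commute (s * z⁻¹) s := (Commute.refl s).mul_left czs.inv_left
  have cs_zz : Commute (z * z) s := czs.mul_left czs
  have cs_zzi : Commute (z⁻¹ * z⁻¹) s := czs.inv_left.mul_left czs.inv_left
  have ct_tz : Commute (t * z) t := (Commute.refl t).mul_left czt
  have ct_tzi : Commute (t * z⁻¹) t := (Commute.refl t).mul_left czt.inv_left
  -- inequality table
  have n_z_s : s ≠ z := Hpar s z hs hzo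
  have n_z_t : t ≠ z := Hpar t z ht hzo
  have n_z_u : s * t * s ≠ z := Hpar _ z huo hzo
  have n_zi_s : s ≠ z⁻¹ := Hpar s z⁻¹ hs hz'o
  have n_zi_t : t ≠ z⁻¹ := Hpar t z⁻¹ ht hz'o
  have n_zi_u : s * t * s ≠ z⁻¹ := Hpar _ _ huo hz'o
  have n_zz_s : s ≠ z * z := Hpar _ _ hs hzzo
  have n_zz_t : t ≠ z * z := Hpar _ _ ht hzzo
  have n_zzi_s : s ≠ z⁻¹ * z⁻¹ := Hpar _ _ hs hzz'o
  have n_zzi_t : t ≠ z⁻¹ * z⁻¹ := Hpar _ _ ht hzz'o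
  have hzi1 : z⁻¹ ≠ 1 := fun h => hz1 (inv_eq_one.mp h)
  have hodd_sq : ∀ v : G, Odd (orderOf v) → v * v = 1 → v = 1 := by
    intro v hv h
    have hdvd : orderOf v ∣ 2 := orderOf_dvd_of_pow_eq_one (by rw [pow_two]; exact h)
    rcases (Nat.dvd_prime Nat.prime_two).mp hdvd with h4 | h4
    · exact orderOf_eq_one_iff.mp h4
    · rw [h4] at hv
      exact absurd hv (by decide)
  have n_z_zi : z ≠ z⁻¹ := by
    intro h
    exact hz1 (hodd_sq z hzo (by nth_rewrite 2 [h]; exact mul_inv_cancel z))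
  have n_sz_1 : s * z ≠ 1 := by
    intro h
    have h2 : s⁻¹ = z := mul_eq_one_iff_inv_eq.mp h
    rw [hsinv] at h2
    exact n_z_s h2
  have n_szi_1 : s * z⁻¹ ≠ 1 := by
    intro h
    have h2 : s⁻¹ = z⁻¹ := mul_eq_one_iff_inv_eq.mp h
    rw [hsinv] at h2
    exact n_zi_s h2
  have n_tz_1 : t * z ≠ 1 := by
    intro h
    have h2 : t⁻¹ = z := mul_eq_one_iff_inv_eq.mp h
    rw [htinv] at h2
    exact n_z_t h2
  have n_tzi_1 : t * z⁻¹ ≠ 1 := by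
    intro h
    have h2 : t⁻¹ = z⁻¹ := mul_eq_one_iff_inv_eq.mp h
    rw [htinv] at h2
    exact n_zi_t h2
  have n_sz_s : s * z ≠ s := fun h => hz1 (mul_left_cancel (show s * z = s * 1 by rw [mul_one]; exact h))
  have n_szi_s : s * z⁻¹ ≠ s := fun h => hzi1 (mul_left_cancel (show s * z⁻¹ = s * 1 by rw [mul_one]; exact h))
  have n_tz_t : t * z ≠ t := fun h => hz1 (mul_left_cancel (show t * z = t * 1 by rw [mul_one]; exact h))
  have n_tzi_t : t * z⁻¹ ≠ t := fun h => hzi1 (mul_left_cancel (show t * z⁻¹ = t * 1 by rw [mul_one]; exact h))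
  have n_sz_t : t ≠ s * z := K1 _ cs_sz
  have n_szi_t : t ≠ s * z⁻¹ := K1 _ cs_szi
  have n_sz_u : s * t * s ≠ s * z := K2 _ cs_sz
  have n_szi_u : s * t * s ≠ s * z⁻¹ := K2 _ cs_szi
  have n_tz_s : s ≠ t * z := K4 _ ct_tz
  have n_tzi_s : s ≠ t * z⁻¹ := K4 _ ct_tzi
  have n_tz_u : s * t * s ≠ t * z := K5 _ ct_tz
  have n_tzi_u : s * t * s ≠ t * z⁻¹ := K5 _ ct_tzi
  have n_sz_z : s * z ≠ z := fun h => hs1 (mul_right_cancel (show s * z = 1 * z by rw [one_mul]; exact h))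
  have n_szi_zi : s * z⁻¹ ≠ z⁻¹ := fun h => hs1 (mul_right_cancel (show s * z⁻¹ = 1 * z⁻¹ by rw [one_mul]; exact h))
  have n_tz_z : t * z ≠ z := fun h => ht1 (mul_right_cancel (show t * z = 1 * z by rw [one_mul]; exact h))
  have n_tzi_zi : t * z⁻¹ ≠ z⁻¹ := fun h => ht1 (mul_right_cancel (show t * z⁻¹ = 1 * z⁻¹ by rw [one_mul]; exact h))
  have n_sz_zi : s * z ≠ z⁻¹ := by
    intro h
    have h0 : s = (s * z) * z⁻¹ := by rw [mul_assoc, mul_inv_cancel, mul_one]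
    rw [h] at h0
    exact n_zzi_s h0
  have n_szi_z : s * z⁻¹ ≠ z := by
    intro h
    have h0 : s = (s * z⁻¹) * z := by rw [mul_assoc, inv_mul_cancel, mul_one]
    rw [h] at h0
    exact n_zz_s h0
  have n_tz_zi : t * z ≠ z⁻¹ := by
    intro h
    have h0 : t = (t * z) * z⁻¹ := by rw [mul_assoc, mul_inv_cancel, mul_one]
    rw [h] at h0
    exact n_zzi_t h0
  have n_tzi_z : t * z⁻¹ ≠ z := by
    intro h
    have h0 : t = (t * z⁻¹) * z := by rw [mul_assoc, inv_mul_cancel, mul_one]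
    rw [h] at h0
    exact n_zz_t h0
  have n_sz_szi : s * z ≠ s * z⁻¹ := fun h => n_z_zi (mul_left_cancel h)
  have n_tz_tzi : t * z ≠ t * z⁻¹ := fun h => n_z_zi (mul_left_cancel h)
  have n_sz_tz : s * z ≠ t * z := fun h => hsnet (mul_right_cancel h)
  have n_szi_tzi : s * z⁻¹ ≠ t * z⁻¹ := fun h => hsnet (mul_right_cancel h)
  have n_sz_tzi : s * z ≠ t * z⁻¹ := by
    intro h
    have h2 : t * (s * z) = z⁻¹ := by rw [h, Ht]
    have h3 : t * s = z⁻¹ * z⁻¹ := by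
      have h4 : t * s = (t * (s * z)) * z⁻¹ := by simp [mul_assoc]
      rw [h4, h2]
    exact K3 _ cs_zzi h3
  have n_szi_tz : s * z⁻¹ ≠ t * z := by
    intro h
    have h2 : t * (s * z⁻¹) = z := by rw [h, Ht]
    have h3 : t * s = z * z := by
      have h4 : t * s = (t * (s * z⁻¹)) * z := by simp [mul_assoc]
      rw [h4, h2]
    exact K3 _ cs_zz h3
  -- the special set
  set S : Set G := ({1, s, t, s * t * s, z, z⁻¹, s * z, s * z⁻¹, t * z, t * z⁻¹} : Set G)
    with hSdef
  have mem1 : (1 : G) ∈ S := by rw [hSdef]; simp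
  have mems : s ∈ S := by rw [hSdef]; simp
  have memt : t ∈ S := by rw [hSdef]; simp
  have memu : s * t * s ∈ S := by rw [hSdef]; simp
  have memz : z ∈ S := by rw [hSdef]; simp
  have memzi : z⁻¹ ∈ S := by rw [hSdef]; simp
  have memsz : s * z ∈ S := by rw [hSdef]; simp
  have memszi : s * z⁻¹ ∈ S := by rw [hSdef]; simp
  have memtz : t * z ∈ S := by rw [hSdef]; simp
  have memtzi : t * z⁻¹ ∈ S := by rw [hSdef]; simp
  -- inverses of special elements
  have inv_u : (s * t * s)⁻¹ = s * t * s := mul_eq_one_iff_inv_eq.mp hu2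
  have inv_sz : (s * z)⁻¹ = s * z⁻¹ := by
    rw [mul_inv_rev, hsinv]
    exact czs.inv_left.eq
  have inv_szi : (s * z⁻¹)⁻¹ = s * z := by
    rw [mul_inv_rev, inv_inv, hsinv]
    exact czs.eq
  have inv_tz : (t * z)⁻¹ = t * z⁻¹ := by
    rw [mul_inv_rev, htinv]
    exact czt.inv_left.eq
  have inv_tzi : (t * z⁻¹)⁻¹ = t * z := by
    rw [mul_inv_rev, inv_inv, htinv]
    exact czt.eq
  have Sinv : ∀ v ∈ S, v⁻¹ ∈ S := by
    intro v hv
    rw [hSdef] at hv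
    simp only [Set.mem_insert_iff, Set.mem_singleton_iff] at hv
    rcases hv with rfl | rfl | rfl | rfl | rfl | rfl | rfl | rfl | rfl | rfl
    · rw [inv_one]; exact mem1
    · rw [hsinv]; exact mems
    · rw [htinv]; exact memt
    · rw [inv_u]; exact memu
    · exact memzi
    · rw [inv_inv]; exact memz
    · rw [inv_sz]; exact memszi
    · rw [inv_szi]; exact memsz
    · rw [inv_tz]; exact memtzi
    · rw [inv_tzi]; exact memtz
  -- adjacency facts
  obtain ⟨k, hk⟩ := hzo
  have hzq : z ^ orderOf z = 1 := pow_orderOf_eq_one z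
  have hs_pow_odd : s ^ orderOf z = s := by
    rw [hk, pow_succ, pow_mul, pow_two, hss, one_pow, one_mul]
  have ht_pow_odd : t ^ orderOf z = t := by
    rw [hk, pow_succ, pow_mul, pow_two, htt, one_pow, one_mul]
  have adj_1_u : (powerGraph G).Adj 1 (s * t * s) :=
    ⟨fun h => hu1 h.symm, Or.inl ⟨2, by rw [pow_two]; exact hu2⟩⟩
  have adj_s_sz : (powerGraph G).Adj s (s * z) := by
    refine ⟨fun h => n_sz_s h.symm, Or.inl ⟨orderOf z, ?_⟩⟩
    rw [Commute.mul_pow czs.symm, hs_pow_odd, hzq, mul_one]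
  have adj_szi_zi : (powerGraph G).Adj (s * z⁻¹) z⁻¹ := by
    refine ⟨n_szi_zi, Or.inr ⟨orderOf z + 1, ?_⟩⟩
    rw [Commute.mul_pow czs.symm.inv_right]
    rw [pow_succ, hs_pow_odd, hss]
    rw [inv_pow, pow_succ, hzq, one_mul, one_mul]
  have adj_z_tzi : (powerGraph G).Adj z (t * z⁻¹) := by
    refine ⟨fun h => n_tzi_z h.symm, Or.inl ⟨2 * k, ?_⟩⟩
    rw [Commute.mul_pow czt.symm.inv_right]
    have e1 : t ^ (2 * k) = 1 := by rw [pow_mul, pow_two, htt, one_pow]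
    have e2 : z ^ (2 * k) = z⁻¹ := by
      have h5 : z ^ (2 * k) * z = 1 := by rw [← pow_succ, ← hk, hzq]
      exact mul_eq_one_iff_eq_inv.mp h5
    rw [e1, one_mul, inv_pow, e2, inv_inv]
  have adj_tz_t : (powerGraph G).Adj (t * z) t := by
    refine ⟨n_tz_t, Or.inr ⟨orderOf z, ?_⟩⟩
    rw [Commute.mul_pow czt.symm, ht_pow_odd, hzq, mul_one]
  have adj_inv : ∀ x : G, x ∉ S → (powerGraph G).Adj x x⁻¹ := by
    intro x hx
    have hx1 : x ≠ 1 := fun h => hx (h ▸ mem1)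
    have hxne : x ≠ x⁻¹ := by
      intro h
      have h2 : x * x = 1 := by nth_rewrite 2 [h]; exact mul_inv_cancel x
      have hdvd : orderOf x ∣ 2 := orderOf_dvd_of_pow_eq_one (by rw [pow_two]; exact h2)
      rcases (Nat.dvd_prime Nat.prime_two).mp hdvd with h4 | h4
      · exact hx1 (orderOf_eq_one_iff.mp h4)
      · rcases hclass x h4 with rfl | rfl | rfl
        · exact hx mems
        · exact hx memt
        · exact hx memu
    refine ⟨hxne, Or.inr ⟨orderOf x - 1, ?_⟩⟩
    have hpos : 0 < orderOf x := orderOf_pos x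
    have h5 : x ^ (orderOf x - 1) * x = 1 := by
      rw [← pow_succ, Nat.sub_add_cancel hpos, pow_orderOf_eq_one]
    exact mul_eq_one_iff_eq_inv.mp h5
  -- the matching subgraph
  refine ⟨⟨Set.univ,
    fun x y =>
      ((x = 1 ∧ y = s * t * s) ∨ (x = s ∧ y = s * z) ∨ (x = s * z⁻¹ ∧ y = z⁻¹) ∨
        (x = z ∧ y = t * z⁻¹) ∨ (x = t * z ∧ y = t) ∨ (x ∉ S ∧ y = x⁻¹)) ∨
      ((y = 1 ∧ x = s * t * s) ∨ (y = s ∧ x = s * z) ∨ (y = s * z⁻¹ ∧ x = z⁻¹) ∨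
        (y = z ∧ x = t * z⁻¹) ∨ (y = t * z ∧ x = t) ∨ (y ∉ S ∧ x = y⁻¹)),
    ?_, fun _ => Set.mem_univ _, ⟨fun x y h => h.symm⟩⟩, ?_⟩
  · -- adj_sub
    rintro x y (h | h)
    · rcases h with ⟨rfl, rfl⟩ | ⟨rfl, rfl⟩ | ⟨rfl, rfl⟩ | ⟨rfl, rfl⟩ | ⟨rfl, rfl⟩ | ⟨h1, rfl⟩
      · exact adj_1_u
      · exact adj_s_sz
      · exact adj_szi_zi
      · exact adj_z_tzi
      · exact adj_tz_t
      · exact adj_inv x h1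
    · rcases h with ⟨rfl, rfl⟩ | ⟨rfl, rfl⟩ | ⟨rfl, rfl⟩ | ⟨rfl, rfl⟩ | ⟨rfl, rfl⟩ | ⟨h1, rfl⟩
      · exact adj_1_u.symm
      · exact adj_s_sz.symm
      · exact adj_szi_zi.symm
      · exact adj_z_tzi.symm
      · exact adj_tz_t.symm
      · exact (adj_inv y h1).symm
  · -- perfect matching
    rw [SimpleGraph.Subgraph.isPerfectMatching_iff]
    intro v
    by_cases hv : v ∈ S
    · rw [hSdef] at hv
      simp only [Set.mem_insert_iff, Set.mem_singleton_iff] at hv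
      rcases hv with hv | hv | hv | hv | hv | hv | hv | hv | hv | hv <;> rw [hv]
      · -- v = 1, partner s*t*s
        refine ⟨s * t * s, Or.inl (Or.inl ⟨rfl, rfl⟩), ?_⟩
        rintro w ((⟨h1, h2⟩ | ⟨h1, h2⟩ | ⟨h1, h2⟩ | ⟨h1, h2⟩ | ⟨h1, h2⟩ | ⟨h1, h2⟩) |
          (⟨h1, h2⟩ | ⟨h1, h2⟩ | ⟨h1, h2⟩ | ⟨h1, h2⟩ | ⟨h1, h2⟩ | ⟨h1, h2⟩))
        · exact h2
        · exact absurd h1.symm hs1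
        · exact absurd h1.symm n_szi_1
        · exact absurd h1.symm hz1
        · exact absurd h1.symm n_tz_1
        · exact absurd mem1 h1
        · exact absurd h2.symm hu1
        · exact absurd h2.symm n_sz_1
        · exact absurd (inv_eq_one.mp h2.symm) hz1
        · exact absurd h2.symm n_tzi_1
        · exact absurd h2.symm ht1
        · refine absurd (show w ∈ S from ?_) h1
          rw [show w = 1 by rw [← inv_inv w, ← h2, inv_one]]
          exact mem1
      · -- v = s, partner s*z
        refine ⟨s * z, Or.inl (Or.inr (Or.inl ⟨rfl, rfl⟩)), ?_⟩
        rintro w ((⟨h1, h2⟩ | ⟨h1, h2⟩ | ⟨h1, h2⟩ | ⟨h1, h2⟩ | ⟨h1, h2⟩ | ⟨h1, h2⟩) |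
          (⟨h1, h2⟩ | ⟨h1, h2⟩ | ⟨h1, h2⟩ | ⟨h1, h2⟩ | ⟨h1, h2⟩ | ⟨h1, h2⟩))
        · exact absurd h1 hs1
        · exact h2
        · exact absurd h1.symm n_szi_s
        · exact absurd h1 n_z_s
        · exact absurd h1 n_tz_s
        · exact absurd mems h1
        · exact absurd h2.symm hu_ne_s
        · exact absurd h2.symm n_sz_s
        · exact absurd h2 n_zi_s
        · exact absurd h2 n_tzi_s
        · exact absurd h2 hsnet
        · refine absurd (show w ∈ S from ?_) h1
          rw [show w = s by rw [← inv_inv w, ← h2, hsinv]]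
          exact mems
      · -- v = t, partner t*z
        refine ⟨t * z, Or.inr (Or.inr (Or.inr (Or.inr (Or.inr (Or.inl ⟨rfl, rfl⟩))))), ?_⟩
        rintro w ((⟨h1, h2⟩ | ⟨h1, h2⟩ | ⟨h1, h2⟩ | ⟨h1, h2⟩ | ⟨h1, h2⟩ | ⟨h1, h2⟩) |
          (⟨h1, h2⟩ | ⟨h1, h2⟩ | ⟨h1, h2⟩ | ⟨h1, h2⟩ | ⟨h1, h2⟩ | ⟨h1, h2⟩))
        · exact absurd h1 ht1
        · exact absurd h1.symm hsnet
        · exact absurd h1 n_szi_t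
        · exact absurd h1 n_z_t
        · exact absurd h1.symm n_tz_t
        · exact absurd memt h1
        · exact absurd h2.symm hu_ne_t
        · exact absurd h2 n_sz_t
        · exact absurd h2 n_zi_t
        · exact absurd h2.symm n_tzi_t
        · exact h1
        · refine absurd (show w ∈ S from ?_) h1
          rw [show w = t by rw [← inv_inv w, ← h2, htinv]]
          exact memt
      · -- v = s*t*s, partner 1
        refine ⟨1, Or.inr (Or.inl ⟨rfl, rfl⟩), ?_⟩
        rintro w ((⟨h1, h2⟩ | ⟨h1, h2⟩ | ⟨h1, h2⟩ | ⟨h1, h2⟩ | ⟨h1, h2⟩ | ⟨h1, h2⟩) |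
          (⟨h1, h2⟩ | ⟨h1, h2⟩ | ⟨h1, h2⟩ | ⟨h1, h2⟩ | ⟨h1, h2⟩ | ⟨h1, h2⟩))
        · exact absurd h1 hu1
        · exact absurd h1 hu_ne_s
        · exact absurd h1 n_szi_u
        · exact absurd h1 n_z_u
        · exact absurd h1 n_tz_u
        · exact absurd memu h1
        · exact h1
        · exact absurd h2 n_sz_u
        · exact absurd h2 n_zi_u
        · exact absurd h2 n_tzi_u
        · exact absurd h2 hu_ne_t
        · refine absurd (show w ∈ S from ?_) h1
          rw [show w = s * t * s by rw [← inv_inv w, ← h2, inv_u]]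
          exact memu
      · -- v = z, partner t*z⁻¹
        refine ⟨t * z⁻¹, Or.inl (Or.inr (Or.inr (Or.inr (Or.inl ⟨rfl, rfl⟩)))), ?_⟩
        rintro w ((⟨h1, h2⟩ | ⟨h1, h2⟩ | ⟨h1, h2⟩ | ⟨h1, h2⟩ | ⟨h1, h2⟩ | ⟨h1, h2⟩) |
          (⟨h1, h2⟩ | ⟨h1, h2⟩ | ⟨h1, h2⟩ | ⟨h1, h2⟩ | ⟨h1, h2⟩ | ⟨h1, h2⟩))
        · exact absurd h1 hz1
        · exact absurd h1.symm n_z_s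
        · exact absurd h1.symm n_szi_z
        · exact h2
        · exact absurd h1.symm n_tz_z
        · exact absurd memz h1
        · exact absurd h2.symm n_z_u
        · exact absurd h2.symm n_sz_z
        · exact absurd h2 n_z_zi
        · exact absurd h2.symm n_tzi_z
        · exact absurd h2.symm n_z_t
        · refine absurd (show w ∈ S from ?_) h1
          rw [show w = z⁻¹ by rw [← inv_inv w, ← h2]]
          exact memzi
      · -- v = z⁻¹, partner s*z⁻¹
        refine ⟨s * z⁻¹, Or.inr (Or.inr (Or.inr (Or.inl ⟨rfl, rfl⟩))), ?_⟩
        rintro w ((⟨h1, h2⟩ | ⟨h1, h2⟩ | ⟨h1, h2⟩ | ⟨h1, h2⟩ | ⟨h1, h2⟩ | ⟨h1, h2⟩) |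
          (⟨h1, h2⟩ | ⟨h1, h2⟩ | ⟨h1, h2⟩ | ⟨h1, h2⟩ | ⟨h1, h2⟩ | ⟨h1, h2⟩))
        · exact absurd h1 hzi1
        · exact absurd h1.symm n_zi_s
        · exact absurd h1.symm n_szi_zi
        · exact absurd h1.symm n_z_zi
        · exact absurd h1.symm n_tz_zi
        · exact absurd memzi h1
        · exact absurd h2.symm n_zi_u
        · exact absurd h2.symm n_sz_zi
        · exact h1
        · exact absurd h2.symm n_tzi_zi
        · exact absurd h2.symm n_zi_t
        · refine absurd (show w ∈ S from ?_) h1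
          rw [show w = z by rw [← inv_inv w, ← h2, inv_inv]]
          exact memz
      · -- v = s*z, partner s
        refine ⟨s, Or.inr (Or.inr (Or.inl ⟨rfl, rfl⟩)), ?_⟩
        rintro w ((⟨h1, h2⟩ | ⟨h1, h2⟩ | ⟨h1, h2⟩ | ⟨h1, h2⟩ | ⟨h1, h2⟩ | ⟨h1, h2⟩) |
          (⟨h1, h2⟩ | ⟨h1, h2⟩ | ⟨h1, h2⟩ | ⟨h1, h2⟩ | ⟨h1, h2⟩ | ⟨h1, h2⟩))
        · exact absurd h1 n_sz_1
        · exact absurd h1 n_sz_s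
        · exact absurd h1 n_sz_szi
        · exact absurd h1 n_sz_z
        · exact absurd h1 n_sz_tz
        · exact absurd memsz h1
        · exact absurd h2 n_sz_u.symm
        · exact h1
        · exact absurd h2 n_sz_zi
        · exact absurd h2 n_sz_tzi
        · exact absurd h2 n_sz_t.symm
        · refine absurd (show w ∈ S from ?_) h1
          rw [show w = s * z⁻¹ by rw [← inv_inv w, ← h2, inv_sz]]
          exact memszi
      · -- v = s*z⁻¹, partner z⁻¹
        refine ⟨z⁻¹, Or.inl (Or.inr (Or.inr (Or.inl ⟨rfl, rfl⟩))), ?_⟩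
        rintro w ((⟨h1, h2⟩ | ⟨h1, h2⟩ | ⟨h1, h2⟩ | ⟨h1, h2⟩ | ⟨h1, h2⟩ | ⟨h1, h2⟩) |
          (⟨h1, h2⟩ | ⟨h1, h2⟩ | ⟨h1, h2⟩ | ⟨h1, h2⟩ | ⟨h1, h2⟩ | ⟨h1, h2⟩))
        · exact absurd h1 n_szi_1
        · exact absurd h1 n_szi_s
        · exact h2
        · exact absurd h1 n_szi_z
        · exact absurd h1 n_szi_tz
        · exact absurd memszi h1
        · exact absurd h2 n_szi_u.symm
        · exact absurd h2.symm n_sz_szi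
        · exact absurd h2 n_szi_zi
        · exact absurd h2 n_szi_tzi
        · exact absurd h2.symm n_szi_t
        · refine absurd (show w ∈ S from ?_) h1
          rw [show w = s * z by rw [← inv_inv w, ← h2, inv_szi]]
          exact memsz
      · -- v = t*z, partner t
        refine ⟨t, Or.inl (Or.inr (Or.inr (Or.inr (Or.inr (Or.inl ⟨rfl, rfl⟩))))), ?_⟩
        rintro w ((⟨h1, h2⟩ | ⟨h1, h2⟩ | ⟨h1, h2⟩ | ⟨h1, h2⟩ | ⟨h1, h2⟩ | ⟨h1, h2⟩) |
          (⟨h1, h2⟩ | ⟨h1, h2⟩ | ⟨h1, h2⟩ | ⟨h1, h2⟩ | ⟨h1, h2⟩ | ⟨h1, h2⟩))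
        · exact absurd h1 n_tz_1
        · exact absurd h1.symm n_tz_s
        · exact absurd h1.symm n_szi_tz
        · exact absurd h1 n_tz_z
        · exact h2
        · exact absurd memtz h1
        · exact absurd h2 n_tz_u.symm
        · exact absurd h2.symm n_sz_tz
        · exact absurd h2 n_tz_zi
        · exact absurd h2 n_tz_tzi
        · exact absurd h2 n_tz_t
        · refine absurd (show w ∈ S from ?_) h1
          rw [show w = t * z⁻¹ by rw [← inv_inv w, ← h2, inv_tz]]
          exact memtzi
      · -- v = t*z⁻¹, partner z
        refine ⟨z, Or.inr (Or.inr (Or.inr (Or.inr (Or.inl ⟨rfl, rfl⟩)))), ?_⟩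
        rintro w ((⟨h1, h2⟩ | ⟨h1, h2⟩ | ⟨h1, h2⟩ | ⟨h1, h2⟩ | ⟨h1, h2⟩ | ⟨h1, h2⟩) |
          (⟨h1, h2⟩ | ⟨h1, h2⟩ | ⟨h1, h2⟩ | ⟨h1, h2⟩ | ⟨h1, h2⟩ | ⟨h1, h2⟩))
        · exact absurd h1 n_tzi_1
        · exact absurd h1.symm n_tzi_s
        · exact absurd h1.symm n_szi_tzi
        · exact absurd h1 n_tzi_z
        · exact absurd h1.symm n_tz_tzi
        · exact absurd memtzi h1
        · exact absurd h2 n_tzi_u.symm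
        · exact absurd h2.symm n_sz_tzi
        · exact absurd h2 n_tzi_zi
        · exact h1
        · exact absurd h2 n_tzi_t
        · refine absurd (show w ∈ S from ?_) h1
          rw [show w = t * z by rw [← inv_inv w, ← h2, inv_tzi]]
          exact memtz
    · -- v ∉ S, partner v⁻¹
      refine ⟨v⁻¹, Or.inl (Or.inr (Or.inr (Or.inr (Or.inr (Or.inr ⟨hv, rfl⟩))))), ?_⟩
      rintro w ((⟨h1, h2⟩ | ⟨h1, h2⟩ | ⟨h1, h2⟩ | ⟨h1, h2⟩ | ⟨h1, h2⟩ | ⟨h1, h2⟩) |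
        (⟨h1, h2⟩ | ⟨h1, h2⟩ | ⟨h1, h2⟩ | ⟨h1, h2⟩ | ⟨h1, h2⟩ | ⟨h1, h2⟩))
      · exact absurd (h1 ▸ mem1) hv
      · exact absurd (h1 ▸ mems) hv
      · exact absurd (h1 ▸ memszi) hv
      · exact absurd (h1 ▸ memz) hv
      · exact absurd (h1 ▸ memtz) hv
      · exact h2
      · exact absurd (h2 ▸ memu) hv
      · exact absurd (h2 ▸ memsz) hv
      · exact absurd (h2 ▸ memzi) hv
      · exact absurd (h2 ▸ memtzi) hv
      · exact absurd (h2 ▸ memt) hv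
      · rw [h2, inv_inv]

end Matching


section Iso

set_option maxHeartbeats 1600000 in
lemma iso_of_injective [Fintype G] (s t : G)
    (hs : orderOf s = 2) (ht : orderOf t = 2) (hst : s * t ≠ t * s)
    (hclass : ∀ x : G, orderOf x = 2 → x = s ∨ x = t ∨ x = s * t * s)
    (hcard : Nat.card {x : G // orderOf x = 2} = 3)
    (hinj : Function.Injective (conjHom (G := G))) :
    Nonempty (G ≃* Equiv.Perm (Fin 3)) := by
  classical
  haveI : Fact (Nat.Prime 2) := ⟨Nat.prime_two⟩
  haveI : Fact (Nat.Prime 3) := ⟨Nat.prime_three⟩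
  have hss : s * s = 1 := sq_one hs
  have htt : t * t = 1 := sq_one ht
  have hsinv : s⁻¹ = s := inv_self hs
  have hu2 : (s * t * s) * (s * t * s) = 1 := u_sq hs ht
  have hu_ne_t : s * t * s ≠ t := u_ne_t hs ht hst
  have hu' : t * s * t = s * t * s := braid hs ht hst hclass
  have hst3 : (s * t) ^ 3 = 1 := by
    rw [pow_succ, pow_two]
    have e : (s * t) * (s * t) * (s * t) = (s * t * s) * (t * s * t) := by
      simp only [mul_assoc]
    rw [e, hu']
    exact hu2
  haveI : Fintype {x : G // orderOf x = 2} := Fintype.ofFinite _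
  -- order of φ s is 2
  have hφs : orderOf (conjHom s) = 2 := by
    refine orderOf_eq_prime (by rw [← map_pow, pow_two, hss, map_one]) ?_
    intro h
    have h2 := congrArg
      (fun σ : Equiv.Perm {x : G // orderOf x = 2} => ((σ ⟨t, ht⟩ : {x : G // orderOf x = 2}) : G)) h
    simp only [conjHom, conjPerm, MonoidHom.coe_mk, OneHom.coe_mk, Equiv.coe_fn_mk,
      Equiv.Perm.one_apply] at h2
    rw [hsinv] at h2
    exact hu_ne_t h2
  -- order of φ (s*t) is 3
  have hφst : orderOf (conjHom (s * t)) = 3 := by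
    refine orderOf_eq_prime (by rw [← map_pow, hst3, map_one]) ?_
    intro h
    have h2 := congrArg
      (fun σ : Equiv.Perm {x : G // orderOf x = 2} => ((σ ⟨s, hs⟩ : {x : G // orderOf x = 2}) : G)) h
    simp only [conjHom, conjPerm, MonoidHom.coe_mk, OneHom.coe_mk, Equiv.coe_fn_mk,
      Equiv.Perm.one_apply] at h2
    have h3 := congrArg (· * (s * t)) h2
    simp only [inv_mul_cancel_right] at h3
    have h4 : s * (t * s) = s * (s * t) := by
      simpa only [mul_assoc] using h3
    exact hst (mul_left_cancel h4).symm
  -- the range is everything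
  have h2d : (2 : ℕ) ∣ Nat.card (conjHom (G := G)).range := by
    have h := Subgroup.orderOf_dvd_natCard (conjHom (G := G)).range (MonoidHom.mem_range.mpr ⟨s, rfl⟩)
    rwa [hφs] at h
  have h3d : (3 : ℕ) ∣ Nat.card (conjHom (G := G)).range := by
    have h := Subgroup.orderOf_dvd_natCard (conjHom (G := G)).range (MonoidHom.mem_range.mpr ⟨s * t, rfl⟩)
    rwa [hφst] at h
  have h6d : (6 : ℕ) ∣ Nat.card (conjHom (G := G)).range :=
    Nat.Coprime.mul_dvd_of_dvd_of_dvd (by norm_num) h2d h3d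
  have hpc : Nat.card (Equiv.Perm {x : G // orderOf x = 2}) = 6 := by
    rw [Nat.card_eq_fintype_card, Fintype.card_perm]
    have e : Fintype.card {x : G // orderOf x = 2} = 3 := by
      rw [← Nat.card_eq_fintype_card]
      exact hcard
    rw [e]
    rfl
  have hRd : Nat.card (conjHom (G := G)).range ∣ 6 := by
    rw [← hpc]
    exact Subgroup.card_subgroup_dvd_card _
  have hR6 : Nat.card (conjHom (G := G)).range = 6 := Nat.dvd_antisymm hRd h6d
  have htop : (conjHom (G := G)).range = ⊤ :=
    Subgroup.eq_top_of_card_eq _ (by rw [hR6, hpc])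
  have hsurj : Function.Surjective (conjHom (G := G)) := MonoidHom.range_eq_top.mp htop
  have e3 : {x : G // orderOf x = 2} ≃ Fin 3 :=
    Fintype.equivFinOfCardEq (by rw [← Nat.card_eq_fintype_card]; exact hcard)
  exact ⟨(MulEquiv.ofBijective _ ⟨hinj, hsurj⟩).trans (permMulCongr e3)⟩

end Iso

end Stmt13Aux

theorem stmt13 (G : Type*) [Group G] [Fintype G]
    (h3 : {t : G | orderOf t = 2}.ncard = 3)
    (hnc : ¬ ∀ s t : G, orderOf s = 2 → orderOf t = 2 → s * t = t * s) :
    Nonempty (G ≃* Equiv.Perm (Fin 3)) ∨ hasPerfectMatching (powerGraph G) := by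
  classical
  open Stmt13Aux in
  push_neg at hnc
  obtain ⟨s, t, hs, ht, hst⟩ := hnc
  have hsnet : s ≠ t := Stmt13Aux.s_ne_t hst
  have huo : orderOf (s * t * s) = 2 := Stmt13Aux.u_order hs ht hst
  have hu_ne_s : s * t * s ≠ s := Stmt13Aux.u_ne_s hs ht hst
  have hu_ne_t : s * t * s ≠ t := Stmt13Aux.u_ne_t hs ht hst
  -- classification of involutions
  have hclass : ∀ x : G, orderOf x = 2 → x = s ∨ x = t ∨ x = s * t * s := by
    have hsub : ({s, t, s * t * s} : Set G) ⊆ {x : G | orderOf x = 2} := by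
      intro x hx
      simp only [Set.mem_insert_iff, Set.mem_singleton_iff] at hx
      rcases hx with rfl | rfl | rfl
      · exact hs
      · exact ht
      · exact huo
    have hc3 : ({s, t, s * t * s} : Set G).ncard = 3 :=
      Set.ncard_eq_three.mpr ⟨s, t, s * t * s, hsnet, Ne.symm hu_ne_s, Ne.symm hu_ne_t, rfl⟩
    have heq : ({s, t, s * t * s} : Set G) = {x : G | orderOf x = 2} :=
      Set.eq_of_subset_of_ncard_le hsub (by rw [h3, hc3]) (Set.toFinite _)
    intro x hx
    have hx' : x ∈ {x : G | orderOf x = 2} := hx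
    rw [← heq] at hx'
    simpa using hx'
  have hu' : t * s * t = s * t * s := Stmt13Aux.braid hs ht hst hclass
  have hcard3 : Nat.card {x : G // orderOf x = 2} = 3 := by
    have e := Nat.card_coe_set_eq {t : G | orderOf t = 2}
    rw [h3] at e
    exact e
  by_cases hker : Function.Injective (Stmt13Aux.conjHom (G := G))
  · exact Or.inl (Stmt13Aux.iso_of_injective s t hs ht hst hclass hcard3 hker)
  · -- kernel is nontrivial
    have hne : (Stmt13Aux.conjHom (G := G)).ker ≠ ⊥ := by
      intro h
      exact hker ((MonoidHom.ker_eq_bot_iff _).mp h)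
    obtain ⟨z, hzker, hz1⟩ : ∃ z ∈ (Stmt13Aux.conjHom (G := G)).ker, z ≠ 1 := by
      rcases Subgroup.ne_bot_iff_exists_ne_one.mp hne with ⟨⟨z, hz⟩, hz1⟩
      exact ⟨z, hz, by simpa using hz1⟩
    -- elements of the kernel commute with all involutions
    have hcomm : ∀ w : G, w ∈ (Stmt13Aux.conjHom (G := G)).ker →
        ∀ x : G, ∀ hx : orderOf x = 2, w * x * w⁻¹ = x := by
      intro w hw x hx
      have h := MonoidHom.mem_ker.mp hw
      have h2 := congrArg
        (fun σ : Equiv.Perm {y : G // orderOf y = 2} =>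
          ((σ ⟨x, hx⟩ : {y : G // orderOf y = 2}) : G)) h
      simpa [Stmt13Aux.conjHom, Stmt13Aux.conjPerm] using h2
    have czs : Commute z s := by
      have h2 := congrArg (· * z) (hcomm z hzker s hs)
      exact (by simpa [mul_assoc] using h2 : z * s = s * z)
    have czt : Commute z t := by
      have h2 := congrArg (· * z) (hcomm z hzker t ht)
      exact (by simpa [mul_assoc] using h2 : z * t = t * z)
    -- no involution lies in the kernel
    have hker2 : ∀ w : G, w ∈ (Stmt13Aux.conjHom (G := G)).ker → orderOf w ≠ 2 := by
      intro w hw hw2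
      rcases hclass w hw2 with rfl | rfl | rfl
      · have h := hcomm _ hw t ht
        rw [Stmt13Aux.inv_self hs] at h
        exact hu_ne_t h
      · have h := hcomm _ hw s hs
        rw [Stmt13Aux.inv_self ht, hu'] at h
        exact hu_ne_s h
      · have h := hcomm _ hw s hs
        have h2 := congrArg (· * (s * t * s)) h
        simp only [inv_mul_cancel_right] at h2
        -- h2 : (s*t*s) * s = s * (s*t*s), i.e. Commute (s*t*s) s
        have h3 : s * (t * (s * s)) = s * (s * (t * s)) := by
          simpa only [mul_assoc] using h2
        have h4 := mul_left_cancel h3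
        rw [Stmt13Aux.sq_one hs, mul_one] at h4
        -- h4 : t = s * (t * s)
        exact hu_ne_t (by simp only [mul_assoc]; exact h4.symm)
    -- the order of z is odd
    haveI : Fintype (Stmt13Aux.conjHom (G := G)).ker := Fintype.ofFinite _
    haveI : Fact (Nat.Prime 2) := ⟨Nat.prime_two⟩
    have hkodd : ¬ (2 ∣ Nat.card (Stmt13Aux.conjHom (G := G)).ker) := by
      intro h2
      obtain ⟨w, hw⟩ := exists_prime_orderOf_dvd_card'
        (G := (Stmt13Aux.conjHom (G := G)).ker) 2 h2
      exact hker2 w.1 w.2 (by rw [Subgroup.orderOf_coe, hw])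
    have hzo : Odd (orderOf z) := by
      have hdvd : orderOf z ∣ Nat.card (Stmt13Aux.conjHom (G := G)).ker :=
        Subgroup.orderOf_dvd_natCard _ hzker
      rcases Nat.even_or_odd (orderOf z) with he | ho
      · exact absurd (dvd_trans (even_iff_two_dvd.mp he) hdvd) hkodd
      · exact ho
    exact Or.inr (Stmt13Aux.matching_of_z s t z hs ht hst hz1 hzo czs czt hclass)
end

section
/- If G is a finite group of even order with exactly n involutions and |G| ≥ 2n·n!, then the commuting graph of G has a perfect matching. -/
open SimpleGraph

def commutingGraph (G : Type*) [Group G] : SimpleGraph G where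
  Adj x y := x ≠ y ∧ x * y = y * x
  symm := ⟨fun x y ⟨h, c⟩ => ⟨h.symm, c.symm⟩⟩
  loopless := ⟨fun x ⟨h, _⟩ => h rfl⟩

/-- A fixed-point-free involutive map along edges gives a perfect matching. -/
lemma pm_of_fun {V : Type*} (Γ : SimpleGraph V) (f : V → V)
    (h1 : ∀ v, f (f v) = v) (h2 : ∀ v, Γ.Adj v (f v)) :
    hasPerfectMatching Γ := by
  refine ⟨⟨Set.univ, fun x y => y = f x ∨ x = f y, ?_, ?_, ?_⟩, ?_, fun v => trivial⟩
  · rintro x y (rfl | rfl)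
    · exact h2 x
    · exact (h2 y).symm
  · intro x y _; trivial
  · refine ⟨?_⟩; rintro x y (rfl | rfl)
    · exact Or.inr rfl
    · exact Or.inl rfl
  · intro v _
    refine ⟨f v, Or.inl rfl, ?_⟩
    rintro y (rfl | rfl)
    · rfl
    · exact (h1 y).symm

/-- Even cardinality of a finset with a fixed-point-free involution. -/
lemma even_card_of_fpf {α : Type*} [DecidableEq α] :
    ∀ (k : ℕ) (A : Finset α) (i : α → α), A.card = k →
    (∀ a ∈ A, i a ∈ A) → (∀ a ∈ A, i (i a) = a) → (∀ a ∈ A, i a ≠ a) →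
    Even A.card := by
  intro k
  induction k using Nat.strong_induction_on with
  | _ k ih =>
    intro A i hk hmem hinv hne
    rcases A.eq_empty_or_nonempty with rfl | ⟨a, ha⟩
    · simp
    · have hia : i a ∈ A := hmem a ha
      have hne' : i a ≠ a := hne a ha
      set A' := A \ {a, i a} with hA'
      have hsub : A' ⊆ A := Finset.sdiff_subset
      have hcard : A'.card = A.card - 2 := by
        rw [hA', Finset.card_sdiff_of_subset]
        · congr 1
          rw [Finset.card_insert_of_notMem (by simp [hne'.symm, Ne.symm]), Finset.card_singleton]
        · intro x hx
          simp only [Finset.mem_insert, Finset.mem_singleton] at hx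
          rcases hx with rfl | rfl <;> assumption
      have h2le : 2 ≤ A.card := by
        have : ({a, i a} : Finset α) ⊆ A := by
          intro x hx
          simp only [Finset.mem_insert, Finset.mem_singleton] at hx
          rcases hx with rfl | rfl <;> assumption
        calc 2 = ({a, i a} : Finset α).card := by
                rw [Finset.card_insert_of_notMem (by simp [hne'.symm, Ne.symm]),
                  Finset.card_singleton]
          _ ≤ A.card := Finset.card_le_card this
      have hmem' : ∀ b ∈ A', i b ∈ A' := by
        intro b hb
        simp only [hA', Finset.mem_sdiff, Finset.mem_insert, Finset.mem_singleton] at hb ⊢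
        obtain ⟨hbA, hb2⟩ := hb
        refine ⟨hmem b hbA, ?_⟩
        rintro (hcontra | hcontra)
        · have hb' := hinv b hbA
          rw [hcontra] at hb'
          exact hb2 (Or.inr hb'.symm)
        · have hb' := hinv b hbA
          rw [hcontra, hinv a ha] at hb'
          exact hb2 (Or.inl hb'.symm)
      have hEA' : Even A'.card :=
        ih (k - 2) (by omega) A' i (by omega) hmem'
          (fun b hb => hinv b (hsub hb)) (fun b hb => hne b (hsub hb))
      have : A.card = A'.card + 2 := by omega
      rw [this]
      exact hEA'.add (by norm_num)

/-- Extract an inversion-closed subset of prescribed even size. -/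
lemma exists_closed_subset {α : Type*} [DecidableEq α] (A : Finset α) (i : α → α)
    (hmem : ∀ a ∈ A, i a ∈ A) (hinv : ∀ a ∈ A, i (i a) = a) (hne : ∀ a ∈ A, i a ≠ a) :
    ∀ m : ℕ, 2 * m ≤ A.card →
    ∃ B : Finset α, B ⊆ A ∧ B.card = 2 * m ∧ ∀ b ∈ B, i b ∈ B := by
  intro m
  induction m with
  | zero => intro _; exact ⟨∅, by simp⟩
  | succ m ihm =>
    intro hle
    obtain ⟨B, hBA, hBcard, hBcl⟩ := ihm (by omega)
    have hlt : B.card < A.card := by omega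
    obtain ⟨a, haA, haB⟩ : ∃ a ∈ A, a ∉ B := by
      by_contra hcon
      push_neg at hcon
      exact absurd (Finset.card_le_card hcon) (by omega)
    have hiaA : i a ∈ A := hmem a haA
    have hiaB : i a ∉ B := by
      intro hcontra
      have := hBcl _ hcontra
      rw [hinv a haA] at this
      exact haB this
    refine ⟨insert a (insert (i a) B), ?_, ?_, ?_⟩
    · intro x hx
      simp only [Finset.mem_insert] at hx
      rcases hx with rfl | rfl | hx
      · exact haA
      · exact hiaA
      · exact hBA hx
    · rw [Finset.card_insert_of_notMem (by simp [haB, hne a haA, Ne.symm (hne a haA)]),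
        Finset.card_insert_of_notMem hiaB, hBcard]
      ring
    · intro b hb
      simp only [Finset.mem_insert] at hb ⊢
      rcases hb with rfl | rfl | hb
      · exact Or.inr (Or.inl rfl)
      · exact Or.inl (hinv a haA)
      · exact Or.inr (Or.inr (hBcl b hb))

theorem stmt14 (G : Type*) [Group G] [Fintype G] (h : Even (Fintype.card G))
    (n : ℕ) (hn : {t : G | orderOf t = 2}.ncard = n)
    (hc : 2 * n * n.factorial ≤ Fintype.card G) :
    hasPerfectMatching (commutingGraph G) := by
  classical
  -- The conjugation action on involutions
  set I := {t : G // orderOf t = 2} with hI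
  have conjmem : ∀ (g : G) (t : G), orderOf t = 2 → orderOf (g * t * g⁻¹) = 2 := by
    intro g t ht
    have : SemiconjBy g t (g * t * g⁻¹) := by
      unfold SemiconjBy; group
    rw [← this.orderOf_eq g, ht]
  let φ : G →* Equiv.Perm I := MonoidHom.mk'
    (fun g => {
      toFun := fun t => ⟨g * t * g⁻¹, conjmem g t t.2⟩
      invFun := fun t => ⟨g⁻¹ * t * g, by simpa using conjmem g⁻¹ t t.2⟩
      left_inv := fun t => by ext; simp; group
      right_inv := fun t => by ext; simp; group })
    (by
      intro g h
      ext t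
      simp
      group)
  set K := φ.ker with hK
  have hKcomm : ∀ k ∈ K, ∀ x : G, x ^ 2 = 1 → k * x = x * k := by
    intro k hk x hx
    rcases eq_or_ne x 1 with rfl | hx1
    · simp
    · have hox : orderOf x = 2 := orderOf_eq_prime hx hx1
      have := congrArg (fun (e : Equiv.Perm I) => (e ⟨x, hox⟩ : G)) hk
      have h2 : k * x * k⁻¹ = x := by simpa [φ] using this
      calc k * x = (k * x * k⁻¹) * k := by group
        _ = x * k := by rw [h2]
  -- counting: the kernel is large
  have hInCard : Nat.card I = n := by
    rw [hI]
    rw [show {t : G // orderOf t = 2} = ↥{t : G | orderOf t = 2} from rfl]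
    rw [Nat.card_coe_set_eq, hn]
  have hQle : Nat.card (G ⧸ K) ≤ n.factorial := by
    have e1 : Nat.card (G ⧸ K) = Nat.card φ.range :=
      Nat.card_congr (QuotientGroup.quotientKerEquivRange φ).toEquiv
    have e2 : Nat.card φ.range ≤ Nat.card (Equiv.Perm I) :=
      Nat.card_le_card_of_injective _ Subtype.val_injective
    have e3 : Nat.card (Equiv.Perm I) = n.factorial := by
      rw [Nat.card_eq_fintype_card, Fintype.card_perm, ← hInCard, Nat.card_eq_fintype_card]
    omega
  have hKcard : 2 * n ≤ Nat.card K := by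
    have e1 : Nat.card G = Nat.card (G ⧸ K) * Nat.card K :=
      Subgroup.card_eq_card_quotient_mul_card_subgroup K
    have e2 : Nat.card G = Fintype.card G := Nat.card_eq_fintype_card
    have e4 : Nat.card (G ⧸ K) * Nat.card K ≤ n.factorial * Nat.card K :=
      Nat.mul_le_mul_right _ hQle
    have e5 : 2 * n * n.factorial ≤ n.factorial * Nat.card K := by omega
    have e6 : n.factorial * (2 * n) ≤ n.factorial * Nat.card K := by
      calc n.factorial * (2 * n) = 2 * n * n.factorial := by ring
        _ ≤ _ := e5
    exact Nat.le_of_mul_le_mul_left e6 (Nat.factorial_pos n)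
  -- n ≥ 1
  have hn1 : 1 ≤ n := by
    obtain ⟨t0, ht0⟩ := exists_prime_orderOf_dvd_card 2 h.two_dvd
    have : ({t : G | orderOf t = 2}).Nonempty := ⟨t0, ht0⟩
    have hfin : ({t : G | orderOf t = 2}).Finite := Set.toFinite _
    have := (Set.ncard_pos hfin).mpr this
    omega
  rcases Nat.even_or_odd (Nat.card K) with hKeven | hKodd
  · -- even kernel: there is a central-ish involution z in K
    obtain ⟨z', hz'⟩ := exists_prime_orderOf_dvd_card' (G := ↥K) 2 (by
      rwa [even_iff_two_dvd] at hKeven)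
    set z : G := (z' : G) with hzdef
    have hzK : z ∈ K := z'.2
    have hzord : orderOf z = 2 := by rw [hzdef, Subgroup.orderOf_coe, hz']
    have hz2 : z ^ 2 = 1 := by rw [← hzord]; exact pow_orderOf_eq_one z
    have hz1 : z ≠ 1 := by
      intro hcon
      rw [hcon, orderOf_one] at hzord
      omega
    refine pm_of_fun _ (fun x => if x ^ 2 = 1 then x * z else x⁻¹) ?_ ?_
    · intro v
      by_cases hv : v ^ 2 = 1
      · have hcz : z * v = v * z := hKcomm z hzK v hv
        have hvz2 : (v * z) ^ 2 = 1 := by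
          have : (v * z) ^ 2 = v ^ 2 * z ^ 2 := by
            rw [pow_two, pow_two, pow_two]
            calc v * z * (v * z) = v * (z * v) * z := by group
              _ = v * (v * z) * z := by rw [hcz]
              _ = v * v * (z * z) := by group
          rw [this, hv, hz2, one_mul]
        simp only [hv, if_true, hvz2, if_true]
        calc v * z * z = v * z ^ 2 := by rw [pow_two, mul_assoc]
          _ = v := by rw [hz2, mul_one]
      · have hvinv : v⁻¹ ^ 2 ≠ 1 := by
          intro hcon
          apply hv
          have : (v ^ 2)⁻¹ = 1 := by rw [← inv_pow]; exact hcon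
          simpa using this
        simp only [hv, if_false, hvinv, inv_inv]
    · intro v
      by_cases hv : v ^ 2 = 1
      · have hcz : z * v = v * z := hKcomm z hzK v hv
        simp only [hv, if_true]
        show _ ≠ _ ∧ _
        constructor
        · intro hcon
          apply hz1
          have := congrArg (fun w => v⁻¹ * w) hcon
          simpa using this.symm
        · calc v * (v * z) = v * (z * v) := by rw [hcz]
            _ = (v * z) * v := by group
      · simp only [hv, if_false]
        show _ ≠ _ ∧ _
        refine ⟨?_, by group⟩
        intro hcon
        apply hv
        rw [pow_two]
        nth_rewrite 2 [hcon]
        exact mul_inv_cancel v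
  · -- odd kernel
    have hK1 : ∀ y ∈ K, y ^ 2 = 1 → y = 1 := by
      intro y hy hy2
      by_contra hy1
      have hoy : orderOf y = 2 := orderOf_eq_prime hy2 hy1
      have : orderOf (⟨y, hy⟩ : ↥K) = 2 := by rw [Subgroup.orderOf_mk, hoy]
      have hdvd : 2 ∣ Nat.card ↥K := by
        rw [← this]
        exact orderOf_dvd_natCard _
      rw [Nat.odd_iff] at hKodd
      omega
    set Sf : Finset G := Finset.univ.filter (fun x : G => x ^ 2 = 1) with hSf
    have hmemSf : ∀ x : G, x ∈ Sf ↔ x ^ 2 = 1 := by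
      intro x; simp [hSf]
    -- Sf has cardinality n + 1
    have hSfcard : Sf.card = n + 1 := by
      have h1T : (1 : G) ∉ Finset.univ.filter (fun t : G => orderOf t = 2) := by simp
      have hins : Sf = insert 1 (Finset.univ.filter (fun t : G => orderOf t = 2)) := by
        ext x
        simp only [hmemSf, Finset.mem_insert, Finset.mem_filter, Finset.mem_univ, true_and]
        constructor
        · intro hx
          rcases eq_or_ne x 1 with rfl | hx1
          · exact Or.inl rfl
          · exact Or.inr (orderOf_eq_prime hx hx1)
        · rintro (rfl | hx)
          · simp
          · rw [← hx]; exact pow_orderOf_eq_one x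
      have hTcard : (Finset.univ.filter (fun t : G => orderOf t = 2)).card = n := by
        rw [← hn, Set.ncard_eq_toFinset_card']
        congr 1
        ext x
        simp
      rw [hins, Finset.card_insert_of_notMem h1T, hTcard]
    -- n + 1 is even
    have hSfeven : Even Sf.card := by
      have hcompl : Even Sfᶜ.card := by
        apply even_card_of_fpf Sfᶜ.card Sfᶜ (fun x => x⁻¹) rfl
        · intro a ha
          simp only [Finset.mem_compl, hmemSf] at ha ⊢
          intro hcon
          apply ha
          have : (a ^ 2)⁻¹ = 1 := by rw [← inv_pow]; exact hcon
          simpa using this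
        · intro a _; exact inv_inv a
        · intro a ha
          simp only [Finset.mem_compl, hmemSf] at ha
          intro hcon
          apply ha
          rw [pow_two]
          nth_rewrite 1 [← hcon]
          exact inv_mul_cancel a
      have htot : Sf.card + Sfᶜ.card = Fintype.card G := Finset.card_add_card_compl Sf
      rcases h with ⟨c, hcc⟩
      rcases hcompl with ⟨d, hd⟩
      refine ⟨c - d, ?_⟩
      omega
    obtain ⟨m, hm⟩ := hSfeven
    -- the finset of nontrivial kernel elements
    set Af : Finset G := Finset.univ.filter (fun x : G => x ∈ K ∧ x ≠ 1) with hAf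
    have hmemAf : ∀ x : G, x ∈ Af ↔ x ∈ K ∧ x ≠ 1 := by
      intro x; simp [hAf]
    have hAfcard : Af.card + 1 = Nat.card K := by
      have hins2 : insert (1:G) Af = Finset.univ.filter (fun x : G => x ∈ K) := by
        ext x
        simp only [Finset.mem_insert, hmemAf, Finset.mem_filter, Finset.mem_univ, true_and]
        constructor
        · rintro (rfl | ⟨h1, _⟩)
          · exact K.one_mem
          · exact h1
        · intro hx
          rcases eq_or_ne x 1 with rfl | hx1
          · exact Or.inl rfl
          · exact Or.inr ⟨hx, hx1⟩
      have h1A : (1:G) ∉ Af := by simp [hmemAf]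
      have hcardins : (insert (1:G) Af).card = Af.card + 1 :=
        Finset.card_insert_of_notMem h1A
      have hKc : (Finset.univ.filter (fun x : G => x ∈ K)).card = Nat.card K := by
        rw [Nat.card_eq_fintype_card]
        exact (Fintype.card_of_subtype _ (fun x => by simp)).symm
      rw [← hKc, ← hins2, hcardins]
    have hKn2 : 2 * n + 1 ≤ Nat.card K := by
      rw [Nat.odd_iff] at hKodd
      omega
    -- extract an inversion-closed subset B of Af with Sf.card elements
    obtain ⟨B, hBA, hBcard, hBcl⟩ := exists_closed_subset Af (fun x => x⁻¹)
      (by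
        intro a ha
        rw [hmemAf] at ha ⊢
        exact ⟨K.inv_mem ha.1, by simpa using ha.2⟩)
      (fun a _ => inv_inv a)
      (by
        intro a ha
        rw [hmemAf] at ha
        intro hcon
        apply ha.2
        apply hK1 a ha.1
        rw [pow_two]
        nth_rewrite 1 [← hcon]
        exact inv_mul_cancel a)
      m
      (by omega)
    have hBnotS : ∀ y ∈ B, y ∉ Sf := by
      intro y hy hyS
      have hyA := hBA hy
      rw [hmemAf] at hyA
      rw [hmemSf] at hyS
      exact hyA.2 (hK1 y hyA.1 hyS)
    have hcards : Fintype.card ↥Sf = Fintype.card ↥B := by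
      rw [Fintype.card_coe, Fintype.card_coe, hBcard]
      omega
    let e : ↥Sf ≃ ↥B := Fintype.equivOfCardEq hcards
    refine pm_of_fun _ (fun x =>
      if hx : x ∈ Sf then ((e ⟨x, hx⟩ : ↥B) : G)
      else if hx2 : x ∈ B then ((e.symm ⟨x, hx2⟩ : ↥Sf) : G)
      else x⁻¹) ?_ ?_
    · intro v
      beta_reduce
      by_cases hv : v ∈ Sf
      · have hy : ((e ⟨v, hv⟩ : ↥B) : G) ∈ B := (e ⟨v, hv⟩).2
        have hyS : ((e ⟨v, hv⟩ : ↥B) : G) ∉ Sf := hBnotS _ hy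
        rw [dif_pos hv, dif_neg hyS, dif_pos hy]
        have heq : (⟨((e ⟨v, hv⟩ : ↥B) : G), hy⟩ : ↥B) = e ⟨v, hv⟩ := Subtype.ext rfl
        rw [heq, Equiv.symm_apply_apply]
      · by_cases hv2 : v ∈ B
        · have hy : ((e.symm ⟨v, hv2⟩ : ↥Sf) : G) ∈ Sf := (e.symm ⟨v, hv2⟩).2
          rw [dif_neg hv, dif_pos hv2, dif_pos hy]
          have heq : (⟨((e.symm ⟨v, hv2⟩ : ↥Sf) : G), hy⟩ : ↥Sf) = e.symm ⟨v, hv2⟩ :=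
            Subtype.ext rfl
          rw [heq, Equiv.apply_symm_apply]
        · have hvS' : v⁻¹ ∉ Sf := by
            rw [hmemSf] at hv ⊢
            intro hcon
            apply hv
            have : (v ^ 2)⁻¹ = 1 := by rw [← inv_pow]; exact hcon
            simpa using this
          have hvB' : v⁻¹ ∉ B := by
            intro hcon
            have := hBcl _ hcon
            rw [inv_inv] at this
            exact hv2 this
          rw [dif_neg hv, dif_neg hv2, dif_neg hvS', dif_neg hvB', inv_inv]
    · intro v
      beta_reduce
      by_cases hv : v ∈ Sf
      · have hy : ((e ⟨v, hv⟩ : ↥B) : G) ∈ B := (e ⟨v, hv⟩).2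
        have hyA := hBA hy
        rw [hmemAf] at hyA
        rw [dif_pos hv]
        show _ ≠ _ ∧ _
        constructor
        · intro hcon
          exact hBnotS _ hy (hcon ▸ hv)
        · exact (hKcomm _ hyA.1 v ((hmemSf v).mp hv)).symm
      · by_cases hv2 : v ∈ B
        · have hy : ((e.symm ⟨v, hv2⟩ : ↥Sf) : G) ∈ Sf := (e.symm ⟨v, hv2⟩).2
          have hvA := hBA hv2
          rw [hmemAf] at hvA
          rw [dif_neg hv, dif_pos hv2]
          show _ ≠ _ ∧ _
          constructor
          · intro hcon
            exact hv (hcon ▸ hy)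
          · exact hKcomm v hvA.1 _ ((hmemSf _).mp hy)
        · rw [dif_neg hv, dif_neg hv2]
          show _ ≠ _ ∧ _
          refine ⟨?_, by group⟩
          intro hcon
          rw [hmemSf] at hv
          apply hv
          rw [pow_two]
          nth_rewrite 2 [hcon]
          exact mul_inv_cancel v
end

section
/- Let G be a finite group of even order with set of involutions S, |S| = n. Suppose that for every involution u there is an involution v not commuting with u, and |G| ≥ n·n!. Then the power graph of G has a perfect matching. -/
open SimpleGraph

section Aux
variable {G : Type*} [Group G] [DecidableEq G]

/-- An inverse-closed finite set with no self-inverse elements has even cardinality. -/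
lemma aux_even_card : ∀ (N : ℕ) (B : Finset G), B.card ≤ N →
    (∀ b ∈ B, b⁻¹ ∈ B) → (∀ b ∈ B, b⁻¹ ≠ b) → Even B.card := by
  intro N
  induction N with
  | zero => intro B hB _ _; rw [Finset.card_eq_zero.mp (Nat.le_zero.mp hB)]; simp
  | succ N ih =>
    intro B hB h1 h2
    rcases B.eq_empty_or_nonempty with rfl | ⟨b, hb⟩
    · simp
    · have hbi := h1 b hb
      have hbne := h2 b hb
      have hmem : b⁻¹ ∈ B.erase b := Finset.mem_erase.mpr ⟨hbne, hbi⟩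
      set B' := (B.erase b).erase b⁻¹ with hB'
      have hcard : B'.card = B.card - 2 := by
        rw [hB', Finset.card_erase_of_mem hmem, Finset.card_erase_of_mem hb]; omega
      have h2le : 2 ≤ B.card := by
        have := Finset.one_lt_card.mpr ⟨b, hb, b⁻¹, hbi, fun h => hbne h.symm⟩
        omega
      have hmem' : ∀ c ∈ B', c ∈ B := fun c hc =>
        Finset.mem_of_mem_erase (Finset.mem_of_mem_erase hc)
      have h1' : ∀ c ∈ B', c⁻¹ ∈ B' := by
        intro c hc
        have hc1 := Finset.mem_erase.mp hc
        have hc2 := Finset.mem_erase.mp hc1.2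
        refine Finset.mem_erase.mpr ⟨?_, Finset.mem_erase.mpr ⟨?_, h1 c (hmem' c hc)⟩⟩
        · intro h; exact hc2.1 (by rw [← inv_inv c, h, inv_inv])
        · intro h; exact hc1.1 (by rw [← inv_inv c, h])
      have h2' : ∀ c ∈ B', c⁻¹ ≠ c := fun c hc => h2 c (hmem' c hc)
      have hle : B'.card ≤ N := by omega
      have := ih B' hle h1' h2'
      have : Even (B.card - 2) := hcard ▸ this
      rcases this with ⟨r, hr⟩
      exact ⟨r + 1, by omega⟩

/-- From an inverse-closed set with no self-inverse elements we can extract an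
inverse-closed subset of any even size. -/
lemma aux_exists_subset : ∀ (k : ℕ) (B : Finset G),
    (∀ b ∈ B, b⁻¹ ∈ B) → (∀ b ∈ B, b⁻¹ ≠ b) → 2 * k ≤ B.card →
    ∃ H : Finset G, H ⊆ B ∧ H.card = 2 * k ∧ ∀ h ∈ H, h⁻¹ ∈ H := by
  intro k
  induction k with
  | zero => intro B _ _ _; exact ⟨∅, by simp⟩
  | succ k ih =>
    intro B h1 h2 hk
    have hBne : B.Nonempty := Finset.card_pos.mp (by omega)
    obtain ⟨b, hb⟩ := hBne
    have hbi := h1 b hb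
    have hbne := h2 b hb
    have hmem : b⁻¹ ∈ B.erase b := Finset.mem_erase.mpr ⟨hbne, hbi⟩
    set B' := (B.erase b).erase b⁻¹ with hB'
    have hcard : B'.card = B.card - 2 := by
      rw [hB', Finset.card_erase_of_mem hmem, Finset.card_erase_of_mem hb]; omega
    have hmem' : ∀ c ∈ B', c ∈ B := fun c hc =>
      Finset.mem_of_mem_erase (Finset.mem_of_mem_erase hc)
    have h1' : ∀ c ∈ B', c⁻¹ ∈ B' := by
      intro c hc
      have hc1 := Finset.mem_erase.mp hc
      have hc2 := Finset.mem_erase.mp hc1.2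
      refine Finset.mem_erase.mpr ⟨?_, Finset.mem_erase.mpr ⟨?_, h1 c (hmem' c hc)⟩⟩
      · intro h; exact hc2.1 (by rw [← inv_inv c, h, inv_inv])
      · intro h; exact hc1.1 (by rw [← inv_inv c, h])
    have h2' : ∀ c ∈ B', c⁻¹ ≠ c := fun c hc => h2 c (hmem' c hc)
    obtain ⟨H', hH'sub, hH'card, hH'inv⟩ := ih B' h1' h2' (by omega)
    have hbH' : b ∉ H' := fun h => (Finset.mem_erase.mp (Finset.mem_erase.mp (hH'sub h)).2).1 rfl
    have hbiH' : b⁻¹ ∉ H' := fun h => (Finset.mem_erase.mp (hH'sub h)).1 rfl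
    refine ⟨insert b (insert b⁻¹ H'), ?_, ?_, ?_⟩
    · intro c hc
      rcases Finset.mem_insert.mp hc with rfl | hc
      · exact hb
      · rcases Finset.mem_insert.mp hc with rfl | hc
        · exact hbi
        · exact hmem' c (hH'sub hc)
    · rw [Finset.card_insert_of_notMem, Finset.card_insert_of_notMem hbiH', hH'card]
      · ring
      · intro h
        rcases Finset.mem_insert.mp h with h | h
        · exact hbne h.symm
        · exact hbH' h
    · intro c hc
      rcases Finset.mem_insert.mp hc with rfl | hc
      · exact Finset.mem_insert_of_mem (Finset.mem_insert_self _ _)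
      · rcases Finset.mem_insert.mp hc with rfl | hc
        · rw [inv_inv]; exact Finset.mem_insert_self _ _
        · exact Finset.mem_insert_of_mem (Finset.mem_insert_of_mem (hH'inv c hc))

end Aux

set_option maxHeartbeats 2000000 in
theorem stmt15 (G : Type*) [Group G] [Fintype G] (h : Even (Fintype.card G))
    (n : ℕ) (hn : {t : G | orderOf t = 2}.ncard = n)
    (hnc : ∀ u : G, orderOf u = 2 → ∃ v : G, orderOf v = 2 ∧ u * v ≠ v * u)
    (hc : n * n.factorial ≤ Fintype.card G) :
    hasPerfectMatching (powerGraph G) := by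
  classical
  set S : Set G := {t : G | orderOf t = 2} with hSdef
  have hmemS : ∀ u : G, u ∈ S ↔ orderOf u = 2 := fun u => Iff.rfl
  have hSmul : ∀ u ∈ S, u * u = 1 := by
    intro u hu
    have := pow_orderOf_eq_one u
    rw [(hmemS u).mp hu] at this
    simpa [pow_two] using this
  have hSinv : ∀ u ∈ S, u⁻¹ = u := fun u hu =>
    inv_eq_of_mul_eq_one_right (hSmul u hu)
  have hSne1 : ∀ u ∈ S, u ≠ 1 := by
    intro u hu h1
    rw [h1, hmemS] at hu
    simp at hu
  -- membership in S from squares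
  have hsq : ∀ x : G, x * x = 1 → x = 1 ∨ x ∈ S := by
    intro x hx
    have : orderOf x ∣ 2 := orderOf_dvd_of_pow_eq_one (by simpa [pow_two] using hx)
    rcases (Nat.dvd_prime Nat.prime_two).mp this with h1 | h2
    · exact Or.inl (orderOf_eq_one_iff.mp h1)
    · exact Or.inr ((hmemS x).mpr h2)
  set K : Subgroup G := Subgroup.centralizer S with hKdef
  have hKcomm : ∀ k ∈ K, ∀ u ∈ S, u * k = k * u := fun k hk =>
    Subgroup.mem_centralizer_iff.mp hk
  have hSK : ∀ u ∈ S, u ∉ K := by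
    intro u hu huK
    obtain ⟨v, hv, hvc⟩ := hnc u ((hmemS u).mp hu)
    exact hvc ((hKcomm u huK v ((hmemS v).mpr hv)).symm)
  have hKodd : ∀ k ∈ K, Odd (orderOf k) := by
    intro k hk
    rw [← Nat.not_even_iff_odd]
    rintro ⟨m, hm⟩
    have hpos : 0 < orderOf k := orderOf_pos k
    have hm0 : m ≠ 0 := by omega
    have hord : orderOf (k ^ m) = 2 := by
      have hg : (m + m).gcd m = m := by
        rw [Nat.gcd_comm]; exact Nat.gcd_eq_left ⟨2, by ring⟩
      rw [orderOf_pow, hm, hg]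
      have h2 : m + m = m * 2 := by ring
      rw [h2, Nat.mul_div_cancel_left _ (by omega : 0 < m)]
    exact hSK _ ((hmemS _).mpr hord) (K.pow_mem hk m)
  -- no nontrivial element of K squares to 1
  have hKsq : ∀ k ∈ K, k * k = 1 → k = 1 := by
    intro k hk hkk
    rcases hsq k hkk with h1 | h2
    · exact h1
    · exact absurd hk (hSK k h2)
  -- elements of K commute with involutions, Commute form
  have hCommute : ∀ u ∈ S, ∀ k ∈ K, Commute u k := fun u hu k hk => (hKcomm k hk u hu)
  -- coset lemma
  have hcoset : ∀ u ∈ S, ∀ v ∈ S, ∀ k ∈ K, ∀ k' ∈ K, u * k = v * k' → u = v := by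
    intro u hu v hv k hk k' hk' heq
    set c := k' * k⁻¹ with hcdef
    have hcK : c ∈ K := K.mul_mem hk' (K.inv_mem hk)
    have huv : u = v * c := by
      rw [hcdef, ← mul_assoc]
      exact eq_mul_inv_of_mul_eq heq
    have hcomm : v * c = c * v := hKcomm _ hcK v hv
    have hv2 : v * v = 1 := hSmul v hv
    have hkey : (v * c) * (v * c) = (v * v) * (c * c) := by
      calc (v * c) * (v * c) = v * (c * v) * c := by group
        _ = v * (v * c) * c := by rw [← hcomm]
        _ = (v * v) * (c * c) := by group
    have hcc : c * c = 1 := by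
      have h1 : (v * c) * (v * c) = 1 := by rw [← huv]; exact hSmul u hu
      rw [hkey, hv2, one_mul] at h1
      exact h1
    rw [huv, hKsq c hcK hcc, mul_one]
  -- finiteness of S
  have hSfin : S.Finite := Set.toFinite S
  set Sf : Finset G := hSfin.toFinset with hSfdef
  have hmemSf : ∀ x, x ∈ Sf ↔ x ∈ S := fun x => hSfin.mem_toFinset
  have hSfcard : Sf.card = n := by
    rw [← hn, Set.ncard_eq_toFinset_card S hSfin]
  -- n is odd
  have hodd : Odd n := by
    have hFeven : Even (Finset.univ.filter fun x : G => x⁻¹ ≠ x).card := by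
      apply aux_even_card (Fintype.card G)
      · exact (Finset.card_filter_le _ _).trans (le_of_eq Finset.card_univ)
      · intro b hb
        simp only [Finset.mem_filter] at hb ⊢
        exact ⟨Finset.mem_univ _, by rw [inv_inv]; exact fun hh => hb.2 hh.symm⟩
      · intro b hb
        simp only [Finset.mem_filter] at hb
        exact hb.2
    have hsplit := Finset.card_filter_add_card_filter_not
      (s := (Finset.univ : Finset G)) (p := fun x : G => x⁻¹ = x)
    have hfix : (Finset.univ.filter fun x : G => x⁻¹ = x) = insert (1 : G) Sf := by
      ext x
      simp only [Finset.mem_filter, Finset.mem_univ, true_and, Finset.mem_insert, hmemSf]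
      constructor
      · intro hx
        apply hsq
        calc x * x = x * x⁻¹ := by rw [hx]
          _ = 1 := mul_inv_cancel x
      · rintro (rfl | hx)
        · simp
        · exact hSinv x hx
    have h1Sf : (1 : G) ∉ Sf := fun hh => hSne1 1 ((hmemSf 1).mp hh) rfl
    have hfixcard : (Finset.univ.filter fun x : G => x⁻¹ = x).card = n + 1 := by
      rw [hfix, Finset.card_insert_of_notMem h1Sf, hSfcard]
    rw [Nat.odd_iff]
    rcases h with ⟨a, ha⟩
    rcases hFeven with ⟨b, hb⟩
    rw [Finset.card_univ] at hsplit
    have hcv : (Finset.univ.filter fun x : G => ¬ x⁻¹ = x).card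
        = (Finset.univ.filter fun x : G => x⁻¹ ≠ x).card := by
      apply Finset.card_bij (fun a _ => a) <;> simp
    omega
  -- conjugation action on the set of involutions
  haveI : Fintype ↥S := hSfin.fintype
  have hcardS : Nat.card ↥S = n := by rw [Nat.card_coe_set_eq, hn]
  set ρ : G →* Equiv.Perm ↥S :=
    { toFun := fun g =>
        { toFun := fun t => ⟨g * t * g⁻¹, by
            have hsc : SemiconjBy g (t : G) (g * t * g⁻¹) := by
              unfold SemiconjBy; group
            show orderOf _ = 2
            rw [← hsc.orderOf_eq]
            exact (hmemS _).mp t.2⟩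
          invFun := fun t => ⟨g⁻¹ * t * g, by
            have hsc : SemiconjBy g⁻¹ (t : G) (g⁻¹ * t * g) := by
              unfold SemiconjBy; group
            show orderOf _ = 2
            rw [← hsc.orderOf_eq]
            exact (hmemS _).mp t.2⟩
          left_inv := fun t => Subtype.ext (by group)
          right_inv := fun t => Subtype.ext (by group) }
      map_one' := Equiv.ext fun t => Subtype.ext (by simp)
      map_mul' := fun g g' => Equiv.ext fun t => Subtype.ext (by
        show (g * g') * t * (g * g')⁻¹ = g * (g' * t * g'⁻¹) * g⁻¹
        group) } with hρdef
  have hker : ρ.ker = K := by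
    ext g
    rw [MonoidHom.mem_ker, hKdef]
    constructor
    · intro hg
      rw [Subgroup.mem_centralizer_iff]
      intro x hx
      have h2 : g * x * g⁻¹ = x := by
        have h3 := Equiv.ext_iff.mp hg ⟨x, hx⟩
        exact congrArg Subtype.val h3
      calc x * g = (g * x * g⁻¹) * g := by rw [h2]
        _ = g * x := by group
    · intro hg
      apply Equiv.ext
      rintro ⟨x, hx⟩
      apply Subtype.ext
      show g * x * g⁻¹ = x
      have := Subgroup.mem_centralizer_iff.mp hg x hx
      rw [← this]
      group
  -- cardinality of K
  have hq : Nat.card (G ⧸ ρ.ker) ≤ n.factorial := by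
    have e := QuotientGroup.quotientKerEquivRange ρ
    rw [Nat.card_congr e.toEquiv]
    calc Nat.card ρ.range ≤ Nat.card (Equiv.Perm ↥S) :=
          Nat.card_le_card_of_injective _ Subtype.val_injective
      _ = n.factorial := by
          rw [Nat.card_eq_fintype_card, Fintype.card_perm, ← Nat.card_eq_fintype_card, hcardS]
  have hKcard : n ≤ Nat.card ↥K := by
    have h1 : Nat.card G = Nat.card (G ⧸ ρ.ker) * Nat.card ρ.ker :=
      Subgroup.card_eq_card_quotient_mul_card_subgroup ρ.ker
    rw [hker] at h1 hq
    have h2 : n * n.factorial ≤ Nat.card (G ⧸ K) * Nat.card ↥K := by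
      rw [← h1, Nat.card_eq_fintype_card]; exact hc
    have h4 : n * n.factorial ≤ Nat.card ↥K * n.factorial := by
      calc n * n.factorial ≤ Nat.card (G ⧸ K) * Nat.card ↥K := h2
        _ ≤ n.factorial * Nat.card ↥K := Nat.mul_le_mul_right _ hq
        _ = Nat.card ↥K * n.factorial := Nat.mul_comm _ _
    exact Nat.le_of_mul_le_mul_right h4 (Nat.factorial_pos n)
  -- finite-set versions
  have hKfin : (K : Set G).Finite := Set.toFinite _
  set Kf : Finset G := hKfin.toFinset with hKfdef
  have hmemKf : ∀ x, x ∈ Kf ↔ x ∈ K := fun x => hKfin.mem_toFinset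
  have hKfcard : Kf.card = Nat.card ↥K := by
    rw [← Set.ncard_eq_toFinset_card (K : Set G) hKfin, ← Nat.card_coe_set_eq]
    rfl
  obtain ⟨j, hj⟩ := hodd
  have hSfpos : 0 < Sf.card := by rw [hSfcard]; omega
  obtain ⟨u₀, hu₀f⟩ := Finset.card_pos.mp hSfpos
  have hu₀S : u₀ ∈ S := (hmemSf u₀).mp hu₀f
  set Bf : Finset G := Kf.erase 1 with hBfdef
  have hmemBf : ∀ x, x ∈ Bf ↔ x ∈ K ∧ x ≠ 1 := by
    intro x
    rw [hBfdef, Finset.mem_erase, hmemKf]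
    tauto
  have hBfcard : 2 * j ≤ Bf.card := by
    have h1K : (1 : G) ∈ Kf := (hmemKf 1).mpr K.one_mem
    rw [hBfdef, Finset.card_erase_of_mem h1K, hKfcard]
    omega
  obtain ⟨Hf, hHsub, hHcard, hHinv⟩ := aux_exists_subset j Bf
    (fun b hb => by
      rw [hmemBf] at hb ⊢
      exact ⟨K.inv_mem hb.1, fun hh => hb.2 (by rw [← inv_inv b, hh, inv_one])⟩)
    (fun b hb => by
      rw [hmemBf] at hb
      intro hh
      exact hb.2 (hKsq b hb.1 (mul_eq_one_iff_eq_inv.mpr hh.symm)))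
    hBfcard
  have hmemHfK : ∀ x ∈ Hf, x ∈ K ∧ x ≠ 1 := fun x hx => (hmemBf x).mp (hHsub hx)
  set S'f : Finset G := Sf.erase u₀ with hS'fdef
  have hS'fcard : S'f.card = 2 * j := by
    rw [hS'fdef, Finset.card_erase_of_mem hu₀f, hSfcard]
    omega
  have hmemS'f : ∀ x ∈ S'f, x ∈ S ∧ x ≠ u₀ := by
    intro x hx
    rw [hS'fdef, Finset.mem_erase] at hx
    exact ⟨(hmemSf x).mp hx.2, hx.1⟩
  -- the pairing between S'f and Hf
  have ecard : Fintype.card ↥S'f = Fintype.card ↥Hf := by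
    rw [Fintype.card_coe, Fintype.card_coe, hS'fcard, hHcard]
  set e : ↥S'f ≃ ↥Hf := Fintype.equivOfCardEq ecard with hedef
  set ψ : G → G := fun x => if hx : x ∈ S'f then (e ⟨x, hx⟩ : G) else 1 with hψdef
  set φ : G → G := fun y => if hy : y ∈ Hf then (e.symm ⟨y, hy⟩ : G) else 1 with hφdef
  have hψmem : ∀ u (hu : u ∈ S'f), ψ u ∈ Hf := by
    intro u hu
    rw [hψdef]
    simp only [dif_pos hu]
    exact (e ⟨u, hu⟩).2
  have hφmem : ∀ x (hx : x ∈ Hf), φ x ∈ S'f := by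
    intro x hx
    rw [hφdef]
    simp only [dif_pos hx]
    exact (e.symm ⟨x, hx⟩).2
  have hφψ : ∀ u (hu : u ∈ S'f), φ (ψ u) = u := by
    intro u hu
    have h1 : ψ u = (e ⟨u, hu⟩ : G) := by rw [hψdef]; simp only [dif_pos hu]
    have h2 : ψ u ∈ Hf := hψmem u hu
    rw [hφdef]
    simp only [dif_pos h2]
    have h3 : (⟨ψ u, h2⟩ : ↥Hf) = e ⟨u, hu⟩ := Subtype.ext h1
    rw [h3, Equiv.symm_apply_apply]
  have hψφ : ∀ x (hx : x ∈ Hf), ψ (φ x) = x := by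
    intro x hx
    have h1 : φ x = (e.symm ⟨x, hx⟩ : G) := by rw [hφdef]; simp only [dif_pos hx]
    have h2 : φ x ∈ S'f := hφmem x hx
    rw [hψdef]
    simp only [dif_pos h2]
    have h3 : (⟨φ x, h2⟩ : ↥S'f) = e.symm ⟨x, hx⟩ := Subtype.ext h1
    rw [h3, Equiv.apply_symm_apply]
  -- power computations for elements u * k
  have hpow_split : ∀ u ∈ S, ∀ k ∈ K, ∀ i : ℕ, (u * k) ^ i = u ^ i * k ^ i :=
    fun u hu k hk i => (hCommute u hu k hk).mul_pow i
  have hu_pow_even : ∀ u ∈ S, ∀ i : ℕ, Even i → u ^ i = 1 := by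
    rintro u hu i ⟨r, hr⟩
    rw [hr, show r + r = 2 * r by ring, pow_mul, pow_two, hSmul u hu, one_pow]
  have hu_pow_odd : ∀ u ∈ S, ∀ i : ℕ, Odd i → u ^ i = u := by
    rintro u hu i ⟨r, hr⟩
    rw [hr, pow_succ, pow_mul, pow_two, hSmul u hu, one_pow, one_mul]
  have hordmul : ∀ u ∈ S, ∀ k ∈ K, orderOf (u * k) = 2 * orderOf k := by
    intro u hu k hk
    have hcop : Nat.Coprime (orderOf u) (orderOf k) := by
      rw [(hmemS u).mp hu]
      exact Nat.coprime_two_left.mpr (hKodd k hk)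
    rw [(hCommute u hu k hk).orderOf_mul_eq_mul_orderOf_of_coprime hcop, (hmemS u).mp hu]
  -- (u*k)^(orderOf k) = u
  have hhalf : ∀ u ∈ S, ∀ k ∈ K, (u * k) ^ (orderOf (u * k) / 2) = u := by
    intro u hu k hk
    have hm := hKodd k hk
    rw [hordmul u hu k hk, Nat.mul_div_cancel_left _ (by norm_num : 0 < 2),
      hpow_split u hu k hk, hu_pow_odd u hu _ hm, pow_orderOf_eq_one, mul_one]
  -- (u * k⁻¹) ^ (orderOf k - 1) = k
  have hback : ∀ u ∈ S, ∀ k ∈ K, (u * k⁻¹) ^ (orderOf k - 1) = k := by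
    intro u hu k hk
    have hm := hKodd k hk
    have hpos : 0 < orderOf k := orderOf_pos k
    have heven : Even (orderOf k - 1) := by
      rcases hm with ⟨r, hr⟩
      exact ⟨r, by omega⟩
    rw [hpow_split u hu k⁻¹ (K.inv_mem hk) _, hu_pow_even u hu _ heven, one_mul]
    have h2 : (k⁻¹) ^ (orderOf k - 1) * k⁻¹ = 1 := by
      rw [← pow_succ, Nat.sub_add_cancel hpos, inv_pow, pow_orderOf_eq_one, inv_one]
    exact mul_inv_eq_one.mp h2
  -- distinctness facts
  have hne1_uk : ∀ u ∈ S, ∀ k ∈ K, u * k ≠ 1 := by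
    intro u hu k hk hh
    exact hSK u hu (by rw [show u = k⁻¹ from eq_inv_of_mul_eq_one_left hh]; exact K.inv_mem hk)
  have hnotS_uk : ∀ u ∈ S, ∀ k ∈ K, k ≠ 1 → u * k ∉ S := by
    intro u hu k hk hk1 hmem
    have h1 : (u * k) * (u * k) = 1 := hSmul _ hmem
    have h2 : (u * k) * (u * k) = k * k := by
      have := hpow_split u hu k hk 2
      rw [pow_two, pow_two, pow_two] at this
      rw [this, hSmul u hu, one_mul]
    exact hk1 (hKsq k hk (by rw [← h2, h1]))
  have hnotK_uk : ∀ u ∈ S, ∀ k ∈ K, u * k ∉ K := by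
    intro u hu k hk hmem
    exact hSK u hu (by
      have : u = (u * k) * k⁻¹ := by group
      rw [this]
      exact K.mul_mem hmem (K.inv_mem hk))
  have hψK : ∀ u (_ : u ∈ S'f), ψ u ∈ K ∧ ψ u ≠ 1 := fun u hu => hmemHfK _ (hψmem u hu)
  -- the matching function
  set PA : G → Prop := fun x => ∃ u, ∃ _ : u ∈ S'f, x = u * ψ u with hPAdef
  set PB : G → Prop := fun x => ∃ u, ∃ _ : u ∈ S'f, x = u * (ψ u)⁻¹ with hPBdef
  set f : G → G := fun x =>
    if x = 1 then u₀
    else if x = u₀ then 1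
    else if x ∈ S'f then x * ψ x
    else if x ∈ Hf then φ x * x⁻¹
    else if PA x then x ^ (orderOf x / 2)
    else if PB x then ψ (x ^ (orderOf x / 2))
    else x⁻¹ with hfdef
  have hf1 : f 1 = u₀ := by simp [hfdef]
  have hfu0 : f u₀ = 1 := by
    simp [hfdef, hSne1 u₀ hu₀S]
  have hfS' : ∀ u (_ : u ∈ S'f), f u = u * ψ u := by
    intro u hu
    obtain ⟨huS, hune⟩ := hmemS'f u hu
    simp only [hfdef]
    rw [if_neg (hSne1 u huS), if_neg hune, if_pos hu]
  have hfH : ∀ x (_ : x ∈ Hf), f x = φ x * x⁻¹ := by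
    intro x hx
    obtain ⟨hxK, hx1⟩ := hmemHfK x hx
    have hxu0 : x ≠ u₀ := fun hh => hSK u₀ hu₀S (hh ▸ hxK)
    have hxS' : x ∉ S'f := fun hh => hSK x (hmemS'f x hh).1 hxK
    simp only [hfdef]
    rw [if_neg hx1, if_neg hxu0, if_neg hxS', if_pos hx]
  have hfA : ∀ u (_ : u ∈ S'f), f (u * ψ u) = u := by
    intro u hu
    obtain ⟨huS, hune⟩ := hmemS'f u hu
    obtain ⟨hkK, hk1⟩ := hψK u hu
    have c1 : u * ψ u ≠ 1 := hne1_uk u huS _ hkK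
    have cS : u * ψ u ∉ S := hnotS_uk u huS _ hkK hk1
    have c2 : u * ψ u ≠ u₀ := fun hh => cS (hh ▸ hu₀S)
    have c3 : u * ψ u ∉ S'f := fun hh => cS (hmemS'f _ hh).1
    have c4 : u * ψ u ∉ Hf := fun hh => hnotK_uk u huS _ hkK (hmemHfK _ hh).1
    have c5 : PA (u * ψ u) := ⟨u, hu, rfl⟩
    simp only [hfdef]
    rw [if_neg c1, if_neg c2, if_neg c3, if_neg c4, if_pos c5]
    exact hhalf u huS _ hkK
  have hfB : ∀ u (_ : u ∈ S'f), f (u * (ψ u)⁻¹) = ψ u := by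
    intro u hu
    obtain ⟨huS, hune⟩ := hmemS'f u hu
    obtain ⟨hkK, hk1⟩ := hψK u hu
    have hkK' : (ψ u)⁻¹ ∈ K := K.inv_mem hkK
    have hk1' : (ψ u)⁻¹ ≠ 1 := fun hh => hk1 (by rw [← inv_inv (ψ u), hh, inv_one])
    have c1 : u * (ψ u)⁻¹ ≠ 1 := hne1_uk u huS _ hkK'
    have cS : u * (ψ u)⁻¹ ∉ S := hnotS_uk u huS _ hkK' hk1'
    have c2 : u * (ψ u)⁻¹ ≠ u₀ := fun hh => cS (hh ▸ hu₀S)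
    have c3 : u * (ψ u)⁻¹ ∉ S'f := fun hh => cS (hmemS'f _ hh).1
    have c4 : u * (ψ u)⁻¹ ∉ Hf := fun hh => hnotK_uk u huS _ hkK' (hmemHfK _ hh).1
    have c5 : ¬ PA (u * (ψ u)⁻¹) := by
      rintro ⟨u', hu', heq⟩
      have hu'S := (hmemS'f u' hu').1
      have := hcoset u huS u' hu'S _ hkK' _ (hψK u' hu').1 heq
      subst this
      have : (ψ u)⁻¹ = ψ u := mul_left_cancel heq
      exact hk1 (hKsq _ hkK (mul_eq_one_iff_eq_inv.mpr this.symm))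
    have c6 : PB (u * (ψ u)⁻¹) := ⟨u, hu, rfl⟩
    simp only [hfdef]
    rw [if_neg c1, if_neg c2, if_neg c3, if_neg c4, if_neg c5, if_pos c6]
    rw [hhalf u huS _ hkK']
  have hfR : ∀ x, x ≠ 1 → x ≠ u₀ → x ∉ S'f → x ∉ Hf → ¬ PA x → ¬ PB x → f x = x⁻¹ := by
    intro x h1 h2 h3 h4 h5 h6
    simp only [hfdef]
    rw [if_neg h1, if_neg h2, if_neg h3, if_neg h4, if_neg h5, if_neg h6]
  have hinv_uk : ∀ u ∈ S, ∀ k ∈ K, (u * k)⁻¹ = u * k⁻¹ := by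
    intro u hu k hk
    rw [mul_inv_rev, hSinv u hu]
    exact ((hCommute u hu k hk).inv_right.eq).symm
  -- the master property: f is an involution realizing power-graph adjacency
  have hmain : ∀ x : G, f (f x) = x ∧ (powerGraph G).Adj x (f x) := by
    intro x
    by_cases hx1 : x = 1
    · subst hx1
      rw [hf1]
      exact ⟨hfu0, show _ ∧ _ from ⟨fun hh => hSne1 u₀ hu₀S hh.symm, Or.inl ⟨0, pow_zero u₀⟩⟩⟩
    by_cases hx2 : x = u₀
    · rw [hx2, hfu0]
      exact ⟨hf1, show _ ∧ _ from ⟨hSne1 u₀ hu₀S, Or.inr ⟨0, pow_zero u₀⟩⟩⟩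
    by_cases hx3 : x ∈ S'f
    · rw [hfS' x hx3]
      refine ⟨hfA x hx3, show _ ∧ _ from ⟨?_, ?_⟩⟩
      · intro hh
        exact (hψK x hx3).2 (left_eq_mul.mp hh)
      · exact Or.inl ⟨orderOf (x * ψ x) / 2, hhalf x (hmemS'f x hx3).1 _ (hψK x hx3).1⟩
    by_cases hx4 : x ∈ Hf
    · rw [hfH x hx4]
      obtain ⟨hxK, hx1'⟩ := hmemHfK x hx4
      have hu := hφmem x hx4
      have huS := (hmemS'f _ hu).1
      refine ⟨?_, show _ ∧ _ from ⟨?_, ?_⟩⟩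
      · have := hfB (φ x) hu
        rwa [hψφ x hx4] at this
      · intro hh
        apply hSK (φ x) huS
        have h2 : x * x = φ x := by nth_rewrite 1 [hh]; group
        exact h2 ▸ K.mul_mem hxK hxK
      · exact Or.inl ⟨orderOf x - 1, hback (φ x) huS x hxK⟩
    by_cases hx5 : PA x
    · rcases hx5 with ⟨u, hu, rfl⟩
      rw [hfA u hu]
      refine ⟨hfS' u hu, show _ ∧ _ from ⟨?_, ?_⟩⟩
      · intro hh
        exact (hψK u hu).2 (left_eq_mul.mp hh.symm)
      · exact Or.inr ⟨orderOf (u * ψ u) / 2, hhalf u (hmemS'f u hu).1 _ (hψK u hu).1⟩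
    by_cases hx6 : PB x
    · rcases hx6 with ⟨u, hu, rfl⟩
      rw [hfB u hu]
      obtain ⟨hkK, hk1⟩ := hψK u hu
      have huS := (hmemS'f u hu).1
      refine ⟨?_, show _ ∧ _ from ⟨?_, ?_⟩⟩
      · rw [hfH _ (hψmem u hu), hφψ u hu]
      · intro hh
        apply hSK u huS
        have h2 : u = ψ u * ψ u := eq_mul_of_mul_inv_eq hh
        rw [h2]; exact K.mul_mem hkK hkK
      · exact Or.inr ⟨orderOf (ψ u) - 1, hback u huS _ hkK⟩
    -- generic region: x ↦ x⁻¹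
    have c1 : x⁻¹ ≠ 1 := fun hh => hx1 (by rw [← inv_inv x, hh, inv_one])
    have c2 : x⁻¹ ≠ u₀ := fun hh => hx2 (by rw [← inv_inv x, hh, hSinv u₀ hu₀S])
    have c3 : x⁻¹ ∉ S'f := by
      intro hh
      have hS := (hmemS'f _ hh).1
      have h2 : x = x⁻¹ := by rw [← hSinv _ hS, inv_inv]
      exact hx3 (by rwa [← h2] at hh)
    have c4 : x⁻¹ ∉ Hf := fun hh => hx4 (by have := hHinv _ hh; rwa [inv_inv] at this)
    have c5 : ¬ PA x⁻¹ := by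
      rintro ⟨u, hu, heq⟩
      apply hx6
      refine ⟨u, hu, ?_⟩
      rw [← inv_inv x, heq, hinv_uk u (hmemS'f u hu).1 _ (hψK u hu).1]
    have c6 : ¬ PB x⁻¹ := by
      rintro ⟨u, hu, heq⟩
      apply hx5
      refine ⟨u, hu, ?_⟩
      rw [← inv_inv x, heq, hinv_uk u (hmemS'f u hu).1 _ (K.inv_mem (hψK u hu).1), inv_inv]
    rw [hfR x hx1 hx2 hx3 hx4 hx5 hx6]
    refine ⟨by rw [hfR x⁻¹ c1 c2 c3 c4 c5 c6, inv_inv], show _ ∧ _ from ⟨?_, ?_⟩⟩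
    · intro hh
      have hxx : x * x = 1 := mul_eq_one_iff_eq_inv.mpr hh
      rcases hsq x hxx with h1 | hS
      · exact hx1 h1
      · apply hx3
        exact Finset.mem_erase.mpr ⟨hx2, (hmemSf x).mpr hS⟩
    · refine Or.inr ⟨orderOf x - 1, ?_⟩
      have hpos : 0 < orderOf x := orderOf_pos x
      have h2 : x ^ (orderOf x - 1) * x = 1 := by
        rw [← pow_succ, Nat.sub_add_cancel hpos, pow_orderOf_eq_one]
      exact eq_inv_of_mul_eq_one_left h2
  -- assemble the perfect matching
  refine ⟨{ verts := Set.univ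
            Adj := fun a b => b = f a
            adj_sub := by rintro a b rfl; exact (hmain a).2
            edge_vert := fun _ => Set.mem_univ _
            symm := ⟨by rintro a b rfl; exact ((hmain a).1).symm⟩ }, ?_⟩
  rw [Subgraph.isPerfectMatching_iff]
  intro v
  exact ⟨f v, rfl, fun y hy => hy⟩
end

section
/- If G is a finite group of odd order, then the power graph of G × C₂ has a perfect matching. -/
open SimpleGraph

lemma pow_even_eq_self {G : Type*} [Group G] [Fintype G] (h : Odd (Fintype.card G))
    (g : G) : ∃ n : ℕ, Even n ∧ g ^ n = g := by
  refine ⟨orderOf g + 1, ?_, by rw [pow_succ, pow_orderOf_eq_one, one_mul]⟩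
  have hodd : Odd (orderOf g) := h.of_dvd_nat (orderOf_dvd_card)
  exact hodd.add_one

lemma key_adj {G : Type*} [Group G] [Fintype G] (h : Odd (Fintype.card G))
    (x y : G × Multiplicative (ZMod 2)) (h1 : x.1 = y.1) (h2 : x ≠ y) :
    (powerGraph (G × Multiplicative (ZMod 2))).Adj x y := by
  refine ⟨h2, ?_⟩
  obtain ⟨n, hn, hgn⟩ := pow_even_eq_self h x.1
  have h2' : x.2 ≠ y.2 := fun hh => h2 (Prod.ext h1 hh)
  have hkey : ∀ a : Multiplicative (ZMod 2), a ^ n = 1 := by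
    intro a
    obtain ⟨k, rfl⟩ := hn
    rw [← two_mul, pow_mul]
    have : a ^ 2 = 1 := by revert a; decide
    rw [this, one_pow]
  have : x.2 = 1 ∨ y.2 = 1 := by
    revert h2'; generalize x.2 = a; generalize y.2 = b; revert a b; decide
  rcases this with hx | hy
  · left
    refine ⟨n, ?_⟩
    rw [Prod.ext_iff, Prod.pow_fst, Prod.pow_snd, ← h1, hgn, hkey, hx]
    exact ⟨rfl, rfl⟩
  · right
    refine ⟨n, ?_⟩
    rw [Prod.ext_iff, Prod.pow_fst, Prod.pow_snd, hkey, hy]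
    exact ⟨h1 ▸ hgn, rfl⟩

theorem stmt17 (G : Type*) [Group G] [Fintype G] (h : Odd (Fintype.card G)) :
    hasPerfectMatching (powerGraph (G × Multiplicative (ZMod 2))) := by
  refine ⟨{ verts := Set.univ
            Adj := fun x y => x.1 = y.1 ∧ x ≠ y
            adj_sub := fun {x y} ⟨h1, h2⟩ => key_adj h x y h1 h2
            edge_vert := fun _ => Set.mem_univ _
            symm := ⟨fun x y ⟨h1, h2⟩ => ⟨h1.symm, h2.symm⟩⟩ }, ?_, fun v => Set.mem_univ v⟩
  intro v _
  refine ⟨(v.1, v.2 * Multiplicative.ofAdd 1), ⟨rfl, ?_⟩, ?_⟩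
  · intro hh
    have := congrArg Prod.snd hh
    simp only at this
    revert this; generalize v.2 = a; revert a; decide
  · rintro w ⟨h1, h2⟩
    have h2' : v.2 ≠ w.2 := fun hh => h2 (Prod.ext h1 hh)
    refine Prod.ext h1.symm ?_
    show w.2 = v.2 * Multiplicative.ofAdd 1
    revert h2'; generalize v.2 = a; generalize w.2 = b; revert a b; decide
end

section
/- Let G be a finite group of order 2ⁿ (n ≥ 1). The power graph of G has a perfect matching if and only if G is cyclic or generalized quaternion. -/
open SimpleGraph

namespace PM

/-- unique involution predicate -/
def UI (G : Type*) [Group G] (z : G) : Prop :=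
  z ≠ 1 ∧ z ^ 2 = 1 ∧ ∀ x : G, x ^ 2 = 1 → x = 1 ∨ x = z

variable {G : Type*} [Group G]

theorem powerGraph_adj {x y : G} : (powerGraph G).Adj x y ↔
    (x ≠ y ∧ ((∃ n : ℕ, y ^ n = x) ∨ (∃ n : ℕ, x ^ n = y))) := Iff.rfl

theorem hasPM_of_UI [Fintype G] {z : G} (hz : UI G z) :
    hasPerfectMatching (powerGraph G) := by
  obtain ⟨hz1, hz2, hzu⟩ := hz
  classical
  set ι : G → G := fun x => if x = 1 then z else if x ^ 2 = 1 then 1 else x⁻¹ with hι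
  have hι1 : ι 1 = z := by simp [hι]
  have hιz : ι z = 1 := by simp [hι, hz1, hz2]
  have hιinv : ∀ x, x ≠ 1 → x ^ 2 ≠ 1 → ι x = x⁻¹ := by
    intro x h1 h2; simp [hι, h1, h2]
  have hinv : ∀ x, ι (ι x) = x := by
    intro x
    by_cases h1 : x = 1
    · subst h1; rw [hι1, hιz]
    by_cases h2 : x ^ 2 = 1
    · rcases hzu x h2 with h | h
      · exact absurd h h1
      · subst h; rw [hιz, hι1]
    · rw [hιinv x h1 h2]
      have h1' : x⁻¹ ≠ 1 := by simpa using h1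
      have h2' : x⁻¹ ^ 2 ≠ 1 := by
        intro hc; apply h2
        have : (x ^ 2)⁻¹ = 1 := by rw [← inv_pow]; exact hc
        simpa using this
      rw [hιinv _ h1' h2', inv_inv]
  have hne : ∀ x, ι x ≠ x := by
    intro x
    by_cases h1 : x = 1
    · subst h1; rw [hι1]; exact hz1
    by_cases h2 : x ^ 2 = 1
    · rcases hzu x h2 with h | h
      · exact absurd h h1
      · subst h; rw [hιz]; exact fun hc => hz1 hc.symm
    · rw [hιinv x h1 h2]
      intro hc
      exact h2 (by rw [pow_two]; nth_rewrite 1 [← hc]; exact inv_mul_cancel x)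
  have hadj : ∀ x, (powerGraph G).Adj x (ι x) := by
    intro x
    refine powerGraph_adj.mpr ⟨(hne x).symm, ?_⟩
    by_cases h1 : x = 1
    · subst h1; rw [hι1]; exact Or.inl ⟨0, pow_zero z⟩
    by_cases h2 : x ^ 2 = 1
    · rcases hzu x h2 with h | h
      · exact absurd h h1
      · subst h; rw [hιz]; exact Or.inr ⟨2, h2⟩
    · rw [hιinv x h1 h2]
      refine Or.inr ⟨orderOf x - 1, ?_⟩
      have hpos : 0 < orderOf x := orderOf_pos x
      have : x ^ (orderOf x - 1) * x = 1 := by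
        rw [← pow_succ, Nat.sub_add_cancel hpos, pow_orderOf_eq_one]
      exact eq_inv_of_mul_eq_one_left this
  refine ⟨⟨Set.univ, fun u v => v = ι u ∨ u = ι v, ?_, fun _ => Set.mem_univ _, ?_⟩,
      ?_, fun v => Set.mem_univ v⟩
  · rintro u v (rfl | rfl)
    · exact hadj u
    · exact (hadj v).symm
  · refine ⟨?_⟩; rintro u v (rfl | rfl)
    · exact Or.inr rfl
    · exact Or.inl rfl
  · rintro v -
    refine ⟨ι v, Or.inl rfl, ?_⟩
    rintro w (rfl | rfl)
    · rfl
    · exact (hinv w).symm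


theorem even_card_invol {α : Type*} [DecidableEq α] (N : ℕ) (s : Finset α) (hcard : s.card = N)
    (f : α → α) (hmem : ∀ a ∈ s, f a ∈ s) (hinv : ∀ a ∈ s, f (f a) = a)
    (hfix : ∀ a ∈ s, f a ≠ a) : Even s.card := by
  induction N using Nat.strong_induction_on generalizing s with
  | _ N ih =>
    rcases s.eq_empty_or_nonempty with rfl | ⟨a, ha⟩
    · simp
    · have hfa : f a ∈ s := hmem a ha
      have hfane : f a ≠ a := hfix a ha
      set s' : Finset α := (s.erase a).erase (f a) with hs'
      have hmem' : ∀ b ∈ s', b ∈ s ∧ b ≠ a ∧ b ≠ f a := by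
        intro b hb
        simp only [hs', Finset.mem_erase] at hb
        exact ⟨hb.2.2, hb.2.1, hb.1⟩
      have hin' : ∀ b, b ∈ s → b ≠ a → b ≠ f a → b ∈ s' := by
        intro b hb h1 h2
        simp only [hs', Finset.mem_erase]
        exact ⟨h2, h1, hb⟩
      have hcard' : s'.card = s.card - 2 := by
        rw [hs', Finset.card_erase_of_mem, Finset.card_erase_of_mem ha]
        · omega
        · exact Finset.mem_erase.mpr ⟨hfane, hfa⟩
      have h2le : 2 ≤ s.card := by
        have : {f a, a} ⊆ s := by
          intro x hx
          rcases Finset.mem_insert.mp hx with rfl | hx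
          · exact hfa
          · rwa [Finset.mem_singleton.mp hx]
        calc 2 = ({f a, a} : Finset α).card := by rw [Finset.card_insert_of_notMem (by simpa using hfane), Finset.card_singleton]
        _ ≤ s.card := Finset.card_le_card this
      have hgoal' : Even s'.card := by
        refine ih (s.card - 2) (by omega) s' hcard' ?_ ?_ ?_
        · intro b hb
          obtain ⟨hbs, h1, h2⟩ := hmem' b hb
          refine hin' _ (hmem b hbs) ?_ ?_
          · intro hc; exact h2 (by rw [← hc, hinv b hbs])
          · intro hc
            have := congrArg f hc
            rw [hinv b hbs, hinv a ha] at this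
            exact h1 this
        · intro b hb; exact hinv b (hmem' b hb).1
        · intro b hb; exact hfix b (hmem' b hb).1
      have h2 : s.card = s'.card + 2 := by omega
      rw [h2]
      exact hgoal'.add even_two

variable [Fintype G]

/-- the involution inside the cyclic group generated by x -/
noncomputable def invo (x : G) : G := x ^ (orderOf x / 2)

theorem order_two_pow {n : ℕ} (hG : Fintype.card G = 2 ^ n) (x : G) :
    ∃ k, orderOf x = 2 ^ k := by
  have : orderOf x ∣ 2 ^ n := by rw [← hG]; exact orderOf_dvd_card
  obtain ⟨k, _, hk⟩ := (Nat.dvd_prime_pow Nat.prime_two).mp this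
  exact ⟨k, hk⟩

theorem two_pow_div {k : ℕ} (hk1 : 1 ≤ k) : 2 ^ k / 2 = 2 ^ (k - 1) := by
  have h : (2:ℕ) ^ k = 2 ^ (k - 1) * 2 := by rw [← pow_succ, Nat.sub_add_cancel hk1]
  rw [h, Nat.mul_div_cancel _ two_pos]

theorem k_pos_of_ne_one {k : ℕ} (x : G) (hx : x ≠ 1) (hk : orderOf x = 2 ^ k) : 1 ≤ k := by
  rcases Nat.eq_zero_or_pos k with rfl | h
  · exfalso; apply hx
    rw [← pow_one x]
    have h1 : orderOf x = 1 := by simpa using hk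
    rw [← h1]; exact pow_orderOf_eq_one x
  · exact h

theorem invo_spec {n : ℕ} (hG : Fintype.card G = 2 ^ n) (x : G) (hx : x ≠ 1) :
    invo x ^ 2 = 1 ∧ invo x ≠ 1 := by
  obtain ⟨k, hk⟩ := order_two_pow hG x
  have hk1 : 1 ≤ k := k_pos_of_ne_one x hx hk
  have hdiv : orderOf x / 2 = 2 ^ (k - 1) := by rw [hk]; exact two_pow_div hk1
  constructor
  · rw [invo, ← pow_mul, hdiv]
    have h2 : 2 ^ (k - 1) * 2 = 2 ^ k := by
      rw [← pow_succ, Nat.sub_add_cancel hk1]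
    rw [h2, ← hk, pow_orderOf_eq_one]
  · rw [invo, hdiv]
    intro hc
    have hd := orderOf_dvd_of_pow_eq_one hc
    rw [hk] at hd
    have hlt : (2:ℕ) ^ (k-1) < 2 ^ k := Nat.pow_lt_pow_right one_lt_two (by omega)
    have := Nat.le_of_dvd (Nat.pow_pos two_pos) hd
    omega

theorem unique_in_cyclic {n : ℕ} (hG : Fintype.card G = 2 ^ n) (x u : G)
    (hu : u ∈ Subgroup.zpowers x) (hu2 : u ^ 2 = 1) (hu1 : u ≠ 1) : u = invo x := by
  obtain ⟨m, hm'⟩ := mem_powers_iff_mem_zpowers.mpr hu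
  have hm : x ^ m = u := hm'
  have hx : x ≠ 1 := by
    rintro rfl
    exact hu1 (by rw [← hm, one_pow])
  obtain ⟨k, hk⟩ := order_two_pow hG x
  have hk1 : 1 ≤ k := k_pos_of_ne_one x hx hk
  have hdvd : orderOf x ∣ 2 * m := by
    apply orderOf_dvd_of_pow_eq_one
    rw [mul_comm, pow_mul, hm, hu2]
  rw [hk] at hdvd
  have h2 : 2 ^ (k-1) ∣ m := by
    have h' : 2 * 2 ^ (k-1) ∣ 2 * m := by
      rwa [← pow_succ', Nat.sub_add_cancel hk1]
    exact (Nat.mul_dvd_mul_iff_left two_pos).mp h'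
  obtain ⟨j, hj⟩ := h2
  have hinvo := invo_spec hG x hx
  have hdiv : orderOf x / 2 = 2 ^ (k - 1) := by rw [hk]; exact two_pow_div hk1
  have hu' : u = invo x ^ j := by
    rw [← hm, hj, pow_mul, invo, hdiv]
  rcases Nat.even_or_odd j with ⟨c, hc⟩ | ⟨c, hc⟩
  · exfalso; apply hu1
    rw [hu', hc, ← two_mul, pow_mul, hinvo.1, one_pow]
  · rw [hu', hc, pow_add, pow_mul, hinvo.1, one_pow, pow_one, one_mul]

theorem invo_eq_of_mem {n : ℕ} (hG : Fintype.card G = 2 ^ n) {x y : G}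
    (hx : x ≠ 1) (h : x ∈ Subgroup.zpowers y) : invo x = invo y := by
  have hy : y ≠ 1 := by
    rintro rfl
    apply hx
    obtain ⟨m, hm'⟩ := mem_powers_iff_mem_zpowers.mpr h
    have hm : (1:G) ^ m = x := hm'
    rw [← hm, one_pow]
  have hmem : invo x ∈ Subgroup.zpowers y := by
    have h1 : invo x ∈ Subgroup.zpowers x := ⟨((orderOf x / 2 : ℕ) : ℤ), by show x ^ ((orderOf x / 2 : ℕ) : ℤ) = invo x; rw [zpow_natCast]; rfl⟩
    exact Subgroup.zpowers_le.mpr h h1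
  obtain ⟨h2, h1⟩ := invo_spec hG x hx
  exact unique_in_cyclic hG y (invo x) hmem h2 h1

theorem invo_of_involution (x : G) (hx2 : x ^ 2 = 1) (hx1 : x ≠ 1) : invo x = x := by
  have h2 : orderOf x = 2 := orderOf_eq_prime hx2 hx1
  rw [invo, h2]
  norm_num

theorem UI_of_PM {n : ℕ} (hn : 1 ≤ n) (hG : Fintype.card G = 2 ^ n)
    (hpm : hasPerfectMatching (powerGraph G)) : ∃ z : G, UI G z := by
  classical
  obtain ⟨M, hM, hSp⟩ := hpm
  have hfex : ∀ v : G, ∃! w, M.Adj v w := fun v => hM (hSp v)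
  set f : G → G := fun v => (hfex v).choose with hf
  have hfadj : ∀ v, M.Adj v (f v) := fun v => (hfex v).choose_spec.1
  have hfuniq : ∀ v w, M.Adj v w → w = f v := fun v w h => (hfex v).choose_spec.2 w h
  have hff : ∀ v, f (f v) = v := fun v => (hfuniq (f v) v (M.adj_symm (hfadj v))).symm
  have hpadj : ∀ v, (powerGraph G).Adj v (f v) := fun v => M.adj_sub (hfadj v)
  have hfne : ∀ v, f v ≠ v := fun v => ((powerGraph_adj.mp (hpadj v)).1).symm
  -- invo is constant on matched pairs
  have hinvof : ∀ v, v ≠ 1 → f v ≠ 1 → invo (f v) = invo v := by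
    intro v hv hfv
    obtain ⟨hne, hp | hp⟩ := powerGraph_adj.mp (hpadj v)
    · obtain ⟨m, hm⟩ := hp
      exact (invo_eq_of_mem hG hv ⟨(m:ℤ), by simpa using hm⟩).symm
    · obtain ⟨m, hm⟩ := hp
      exact invo_eq_of_mem hG hfv ⟨(m:ℤ), by simpa using hm⟩
  set p : G := f 1 with hp
  -- for every involution c, p lies in S_c
  have key : ∀ c : G, c ≠ 1 → c ^ 2 = 1 → p ≠ 1 ∧ invo p = c := by
    intro c hc1 hc2
    set S : Finset G := Finset.univ.filter (fun x => x ≠ 1 ∧ invo x = c) with hS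
    have hmemS : ∀ x, x ∈ S ↔ (x ≠ 1 ∧ invo x = c) := by
      intro x; simp [hS]
    have hcS : c ∈ S := (hmemS c).mpr ⟨hc1, invo_of_involution c hc2 hc1⟩
    -- S.erase c has even card via inversion
    have heven1 : Even ((S.erase c).card) := by
      refine even_card_invol _ _ rfl (fun x => x⁻¹) ?_ ?_ ?_
      · intro b hb
        obtain ⟨hbc, hbS⟩ := Finset.mem_erase.mp hb
        obtain ⟨hb1, hbi⟩ := (hmemS b).mp hbS
        have hb1' : b⁻¹ ≠ 1 := by simpa using hb1
        have hmemb : b⁻¹ ∈ Subgroup.zpowers b := ⟨(-1 : ℤ), by simp⟩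
        have hbinv : invo b⁻¹ = c := by
          rw [invo_eq_of_mem hG hb1' hmemb, hbi]
        refine Finset.mem_erase.mpr ⟨?_, (hmemS _).mpr ⟨hb1', hbinv⟩⟩
        intro hbc'
        apply hbc
        have hbci : b = c⁻¹ := by rw [← hbc', inv_inv]
        rw [hbci]
        exact inv_eq_of_mul_eq_one_left (by rw [← pow_two]; exact hc2)
      · intro b _; simp
      · intro b hb
        obtain ⟨hbc, hbS⟩ := Finset.mem_erase.mp hb
        obtain ⟨hb1, hbi⟩ := (hmemS b).mp hbS
        intro hbb
        apply hbc
        have hb2 : b ^ 2 = 1 := by rw [pow_two]; nth_rewrite 1 [← hbb]; exact inv_mul_cancel b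
        rw [← hbi, invo_of_involution b hb2 hb1]
      
    have hodd : ¬ Even S.card := by
      rw [← Finset.card_erase_add_one hcS, Nat.even_add_one]
      exact not_not_intro heven1
    by_contra hcon
    push_neg at hcon
    -- then f maps S into S with no fixed points, so S has even card
    have hpS : p ∉ S := by
      intro hpmem
      obtain ⟨hp1, hpi⟩ := (hmemS p).mp hpmem
      exact (hcon hp1) hpi
    apply hodd
    refine even_card_invol _ _ rfl f ?_ ?_ ?_
    · intro b hb
      obtain ⟨hb1, hbi⟩ := (hmemS b).mp hb
      have hfb1 : f b ≠ 1 := by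
        intro hc
        apply hpS
        have : b = p := by rw [hp, ← hc, hff]
        rwa [← this]
      refine (hmemS _).mpr ⟨hfb1, ?_⟩
      rw [hinvof b hb1 hfb1, hbi]
    · intro b _; exact hff b
    · intro b _; exact hfne b
  -- existence of an involution
  haveI : Fact (Nat.Prime 2) := ⟨Nat.prime_two⟩
  obtain ⟨z0, hz0⟩ := exists_prime_orderOf_dvd_card 2
    (by rw [hG]; exact dvd_pow_self 2 (by omega))
  have hz01 : z0 ≠ 1 := by
    intro hc; rw [hc, orderOf_one] at hz0; omega
  have hz02 : z0 ^ 2 = 1 := by rw [← hz0]; exact pow_orderOf_eq_one z0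
  refine ⟨z0, hz01, hz02, ?_⟩
  intro x hx2
  by_cases hx1 : x = 1
  · exact Or.inl hx1
  · right
    obtain ⟨hpne, hpx⟩ := key x hx1 hx2
    obtain ⟨_, hpz⟩ := key z0 hz01 hz02
    rw [← hpx, hpz]


theorem UI_of_isCyclic {n : ℕ} (hn : 1 ≤ n) (hc : IsCyclic G)
    (hG : Fintype.card G = 2 ^ n) : ∃ z : G, UI G z := by
  obtain ⟨g, hg⟩ := hc
  have hg' : ∀ x : G, x ∈ Subgroup.zpowers g := fun x => hg x
  have hord : orderOf g = 2 ^ n := by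
    rw [orderOf_eq_card_of_forall_mem_zpowers hg', Nat.card_eq_fintype_card, hG]
  have hg1 : g ≠ 1 := by
    intro h
    rw [h, orderOf_one] at hord
    have : 1 < 2 ^ n := Nat.one_lt_two_pow_iff.mpr (by omega)
    omega
  obtain ⟨hz2, hz1⟩ := invo_spec hG g hg1
  refine ⟨invo g, hz1, hz2, fun x hx2 => ?_⟩
  by_cases hx1 : x = 1
  · exact Or.inl hx1
  · exact Or.inr (unique_in_cyclic hG g x (hg' x) hx2 hx1)

theorem UI_transfer {H : Type*} [Group H] (e : G ≃* H) {z : G}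
    (h : UI G z) : UI H (e z) := by
  obtain ⟨h1, h2, h3⟩ := h
  refine ⟨fun hc => h1 (e.injective (hc.trans (map_one e).symm)), ?_, ?_⟩
  · rw [← map_pow, h2, map_one]
  · intro x hx
    have hsx : (e.symm x) ^ 2 = 1 := by
      rw [← map_pow, hx, map_one]
    rcases h3 _ hsx with h | h
    · left
      have := congrArg e h
      simpa using this
    · right
      have := congrArg e h
      simpa using this

theorem int_sq_cases {k : ℕ} (hk : 2 ≤ k) {r : ℤ} (h : (2:ℤ) ^ k ∣ r ^ 2 - 1) :
    (2:ℤ) ^ k ∣ r - 1 ∨ (2:ℤ) ^ k ∣ r + 1 ∨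
      (3 ≤ k ∧ ((2:ℤ) ^ k ∣ r - (2 ^ (k-1) + 1) ∨ (2:ℤ) ^ k ∣ r - (2 ^ (k-1) - 1))) := by
  have e1 : (2:ℤ) ^ k = 2 * 2 ^ (k-1) := by
    rw [← pow_succ']
    congr 1
    omega
  have e2 : (2:ℤ) ^ (k-1) = 2 * 2 ^ (k-2) := by
    rw [← pow_succ']
    congr 1
    omega
  have h4 : (4:ℤ) ∣ r ^ 2 - 1 := by
    refine dvd_trans ?_ h
    rw [show (4:ℤ) = 2 ^ 2 by norm_num]
    exact pow_dvd_pow 2 hk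
  have hrodd : Odd r := by
    rcases Int.even_or_odd r with he | ho
    · exfalso
      have hsq : Even (r ^ 2) := by rw [pow_two]; exact he.mul_left r
      have h1 : Odd (r ^ 2 - 1) := hsq.sub_odd odd_one
      obtain ⟨w, hw⟩ := dvd_trans (show (2:ℤ) ∣ 4 by norm_num) h4
      have h2 : Even (r ^ 2 - 1) := ⟨w, by omega⟩
      exact (Int.not_odd_iff_even.mpr h2) h1
    · exact ho
  obtain ⟨c, hc⟩ := hrodd
  have hfact : r ^ 2 - 1 = 4 * (c * (c + 1)) := by rw [hc]; ring
  have hdvd : (2:ℤ) ^ (k-2) ∣ c * (c + 1) := by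
    have h1 : (4:ℤ) * 2 ^ (k-2) ∣ 4 * (c * (c + 1)) := by
      rw [← hfact, show (4:ℤ) * 2 ^ (k-2) = 2 ^ k by rw [e1, e2]; ring]
      exact h
    exact (mul_dvd_mul_iff_left (by norm_num : (4:ℤ) ≠ 0)).mp h1
  have hodd_dvd : ∀ d e : ℤ, Odd d → (2:ℤ) ^ (k-2) ∣ d * e → (2:ℤ) ^ (k-2) ∣ e := by
    intro d e hd hde
    have hcop : IsCoprime ((2:ℤ) ^ (k-2)) d := by
      apply IsCoprime.pow_left
      rw [Int.isCoprime_iff_gcd_eq_one]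
      have : Odd d.natAbs := Int.natAbs_odd.mpr hd
      simpa [Int.gcd] using Nat.coprime_two_left.mpr this
    exact hcop.dvd_of_dvd_mul_left hde
  have hmain : ∃ ε : ℤ, (ε = 1 ∨ ε = -1) ∧ (2:ℤ) ^ (k-1) ∣ r - ε := by
    rcases Int.even_or_odd c with hce | hco
    · refine ⟨1, Or.inl rfl, ?_⟩
      have hc1 : Odd (c + 1) := hce.add_one
      have := hodd_dvd (c+1) c hc1 (by rwa [mul_comm] at hdvd)
      obtain ⟨v, hv⟩ := this
      exact ⟨v, by rw [hc, e2]; linarith⟩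
    · refine ⟨-1, Or.inr rfl, ?_⟩
      have := hodd_dvd c (c+1) hco hdvd
      obtain ⟨v, hv⟩ := this
      exact ⟨v, by rw [hc, e2]; linarith⟩
  obtain ⟨ε, hε, ⟨t, ht⟩⟩ := hmain
  rcases Int.even_or_odd t with ⟨v, hv⟩ | ⟨v, hv⟩
  · -- r ≡ ε mod 2^k
    have hred : (2:ℤ) ^ k ∣ r - ε := ⟨v, by rw [e1]; linear_combination ht + 2 ^ (k-1) * hv⟩
    rcases hε with rfl | rfl
    · exact Or.inl hred
    · refine Or.inr (Or.inl ?_)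
      simpa using hred
  · -- r ≡ ε + 2^(k-1) mod 2^k
    have hr' : r = ε + 2 ^ (k-1) + 2 ^ k * v := by
      rw [e1]
      linear_combination ht + 2 ^ (k-1) * hv
    by_cases hk3 : 3 ≤ k
    · refine Or.inr (Or.inr ⟨hk3, ?_⟩)
      rcases hε with rfl | rfl
      · exact Or.inl ⟨v, by linear_combination hr'⟩
      · exact Or.inr ⟨v, by linear_combination hr'⟩
    · have hk2 : k = 2 := by omega
      subst hk2
      rcases hε with rfl | rfl
      · refine Or.inr (Or.inl ⟨v + 1, by norm_num at hr' ⊢; omega⟩)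
      · refine Or.inl ⟨v, by norm_num at hr' ⊢; omega⟩

theorem int_dvd_cancel_odd {m : ℕ} {W t : ℤ} (hW : Odd W) (h : (2:ℤ) ^ m ∣ W * t) :
    (2:ℤ) ^ m ∣ t := by
  have hcop : IsCoprime ((2:ℤ) ^ m) W := by
    apply IsCoprime.pow_left
    rw [Int.isCoprime_iff_gcd_eq_one]
    have h1 : Odd W.natAbs := Int.natAbs_odd.mpr hW
    simpa [Int.gcd] using Nat.coprime_two_left.mpr h1
  exact hcop.dvd_of_dvd_mul_left h

theorem int_solve_odd {m : ℕ} {W : ℤ} (hW : Odd W) (s : ℤ) :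
    ∃ j : ℤ, (2:ℤ) ^ m ∣ s + j * W := by
  have hcop : IsCoprime W ((2:ℤ) ^ m) := by
    apply IsCoprime.pow_right
    rw [Int.isCoprime_iff_gcd_eq_one]
    have h1 : Odd W.natAbs := Int.natAbs_odd.mpr hW
    simpa [Int.gcd] using Nat.coprime_two_right.mpr h1
  obtain ⟨u, v, huv⟩ := hcop
  exact ⟨-s * u, ⟨s * v, by linear_combination -s * huv⟩⟩

theorem core {z : G} (hz : UI G z)
    {a x : G} {m : ℕ} (hm : 1 ≤ m) (ho : orderOf a = 2 ^ (m+1))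
    (hxA : x ∉ Subgroup.zpowers a) (hx2 : x ^ 2 ∈ Subgroup.zpowers a)
    (hconj : x * a * x⁻¹ ∈ Subgroup.zpowers a) (hne : x * a ≠ a * x) :
    x * a * x⁻¹ = a⁻¹ ∧ x ^ 2 = a ^ (2 ^ m) := by
  obtain ⟨hz1, hz2, hzu⟩ := hz
  obtain ⟨r, hr⟩ := Subgroup.mem_zpowers_iff.mp hconj
  obtain ⟨t, ht⟩ := Subgroup.mem_zpowers_iff.mp hx2
  have hxx : x * x = a ^ t := by rw [ht, pow_two]
  have hone : a ^ ((2:ℤ) ^ (m+1)) = 1 := by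
    have h1 : a ^ (((2 ^ (m+1) : ℕ)) : ℤ) = 1 := by
      rw [zpow_natCast, ← ho, pow_orderOf_eq_one]
    rwa [show (((2 ^ (m+1) : ℕ)) : ℤ) = (2:ℤ) ^ (m+1) by push_cast; ring] at h1
  have hordz : ((orderOf a : ℕ) : ℤ) = 2 ^ (m+1) := by rw [ho]; push_cast; ring
  have heq_of : ∀ c d : ℤ, (2:ℤ) ^ (m+1) ∣ c - d → a ^ c = a ^ d := by
    rintro c d ⟨q, hq⟩
    have hcd : c = d + 2 ^ (m+1) * q := by linarith
    rw [hcd, zpow_add, zpow_mul, hone, one_zpow, mul_one]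
  have hdvd_of : ∀ c d : ℤ, a ^ c = a ^ d → (2:ℤ) ^ (m+1) ∣ c - d := by
    intro c d h
    have h1 := zpow_eq_zpow_iff_modEq.mp h
    have h2 := Int.ModEq.dvd h1
    rw [hordz] at h2
    have h3 := dvd_neg.mpr h2
    rwa [neg_sub] at h3
  -- sigma squared is identity
  have key : a ^ (r * r) = a := by
    rw [zpow_mul, hr, conj_zpow, hr]
    calc x * (x * a * x⁻¹) * x⁻¹ = (x * x) * a * (x * x)⁻¹ := by group
      _ = a ^ t * a * (a ^ t)⁻¹ := by rw [hxx]
      _ = a := by rw [← ((Commute.refl a).zpow_right t).eq, mul_inv_cancel_right]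
  have hr2 : (2:ℤ) ^ (m+1) ∣ r * r - 1 := by
    refine hdvd_of (r * r) 1 ?_
    rw [zpow_one]; exact key
  -- conjugate of x^2 is itself
  have hconjt : a ^ (r * t) = a ^ t := by
    have h1 : x * a ^ t * x⁻¹ = a ^ t := by
      rw [← hxx]; group
    rw [zpow_mul, hr, conj_zpow, h1]
  have hdvd_t : (2:ℤ) ^ (m+1) ∣ t * (r - 1) := by
    have h1 := hdvd_of (r * t) t hconjt
    have h2 : t * (r - 1) = r * t - t := by ring
    rwa [h2]
  -- inverse conjugation
  have hconj_inv : x⁻¹ * a * x = a ^ r := by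
    have h5 : x * a ^ r * x⁻¹ = a := by
      rw [← conj_zpow, ← hr, ← zpow_mul]; exact key
    have h6 := congrArg (fun g => x⁻¹ * g * x) h5
    rw [← h6]; group
  -- conjugation formula for squares of x * a^j
  have hy2gen : ∀ j : ℤ, (x * a ^ j) ^ 2 = a ^ (t + (j * r + j)) := by
    intro j
    have h6 : x⁻¹ * a ^ j * x = a ^ (j * r) := by
      have h7 := conj_zpow (i := j) (a := x⁻¹) (b := a)
      rw [inv_inv, hconj_inv, ← zpow_mul, mul_comm r j] at h7
      exact h7.symm
    calc (x * a ^ j) ^ 2 = (x * x) * (x⁻¹ * a ^ j * x) * a ^ j := by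
          rw [pow_two]; group
      _ = a ^ t * a ^ (j * r) * a ^ j := by rw [hxx, h6]
      _ = a ^ (t + (j * r + j)) := by rw [← zpow_add, ← zpow_add, add_assoc]
  -- x * a^j is never in zpowers a
  have hy_not : ∀ j : ℤ, x * a ^ j ∉ Subgroup.zpowers a := by
    intro j hj
    obtain ⟨c, hc⟩ := Subgroup.mem_zpowers_iff.mp hj
    apply hxA
    refine Subgroup.mem_zpowers_iff.mpr ⟨c - j, ?_⟩
    rw [zpow_sub, hc, mul_inv_eq_iff_eq_mul]
  -- z = a ^ 2^m
  have hw2 : (a ^ (2 ^ m : ℕ)) ^ 2 = 1 := by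
    rw [← pow_mul, show 2 ^ m * 2 = 2 ^ (m+1) from (pow_succ 2 m).symm, ← ho,
      pow_orderOf_eq_one]
  have hw1 : (a ^ (2 ^ m : ℕ)) ≠ 1 := by
    intro hc
    have h1 := orderOf_dvd_of_pow_eq_one hc
    rw [ho] at h1
    have h2 := Nat.le_of_dvd (Nat.pow_pos two_pos) h1
    have h3 : (2:ℕ) ^ m < 2 ^ (m+1) := Nat.pow_lt_pow_right one_lt_two (by omega)
    omega
  have hwz : a ^ (2 ^ m : ℕ) = z := by
    rcases hzu _ hw2 with h | h
    · exact absurd h hw1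
    · exact h
  have hzmem : z ∈ Subgroup.zpowers a := by
    rw [← hwz]; exact Subgroup.mem_zpowers_iff.mpr ⟨(2 ^ m : ℕ), by rw [zpow_natCast]⟩
  have hwz' : a ^ ((2:ℤ) ^ m) = z := by
    rw [show ((2:ℤ) ^ m) = (((2 ^ m : ℕ)) : ℤ) by push_cast; ring, zpow_natCast, hwz]
  have hnotsq1 : x ^ 2 ≠ 1 := by
    intro hc
    rcases hzu x hc with rfl | rfl
    · exact hxA (Subgroup.one_mem _)
    · exact hxA hzmem
  have hz2' : z ^ (2:ℤ) = 1 := by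
    rw [show (2:ℤ) = ((2:ℕ) : ℤ) by norm_num, zpow_natCast, hz2]
  -- now case on the structure of r
  rcases int_sq_cases (show 2 ≤ m + 1 by omega) (show (2:ℤ)^(m+1) ∣ r^2 - 1 by rw [pow_two]; exact hr2)
    with hA | hB | ⟨hk3, hC | hD⟩
  · -- r ≡ 1 : contradiction with noncommutativity
    exfalso
    apply hne
    have h1 : a ^ r = a ^ (1:ℤ) := heq_of r 1 hA
    rw [zpow_one] at h1
    have h2 : x * a * x⁻¹ = a := by rw [← hr, h1]
    calc x * a = (x * a * x⁻¹) * x := by group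
      _ = a * x := by rw [h2]
  · -- r ≡ -1 : quaternion relations
    have h1 : a ^ r = a ^ (-1:ℤ) := heq_of r (-1) (by rwa [sub_neg_eq_add])
    have hinv : x * a * x⁻¹ = a⁻¹ := by rw [← hr, h1, zpow_neg_one]
    refine ⟨hinv, ?_⟩
    -- 2^m divides t
    have h2 : (2:ℤ) ^ (m+1) ∣ t * (r + 1) := Dvd.dvd.mul_left hB t
    have h3 : (2:ℤ) ^ (m+1) ∣ 2 * t := by
      have := dvd_sub h2 hdvd_t
      rwa [show t * (r+1) - t * (r-1) = 2 * t by ring] at this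
    have h4 : (2:ℤ) ^ m ∣ t := by
      have h5 : (2:ℤ) * 2 ^ m ∣ 2 * t := by
        rwa [show (2:ℤ) * 2 ^ m = 2 ^ (m+1) by rw [pow_succ]; ring]
      exact (mul_dvd_mul_iff_left (by norm_num : (2:ℤ) ≠ 0)).mp h5
    obtain ⟨u, hu⟩ := h4
    have hxt : x ^ 2 = z ^ u := by
      rw [← ht, hu, zpow_mul, hwz']
    rcases Int.even_or_odd u with ⟨v, hv⟩ | ⟨v, hv⟩
    · exfalso
      apply hnotsq1
      rw [hxt, hv, ← two_mul, zpow_mul, hz2', one_zpow]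
    · rw [hxt, hv, zpow_add, zpow_mul, hz2', one_zpow, zpow_one, one_mul, ← hwz]
  · -- modular case : contradiction
    exfalso
    have hm2 : 2 ≤ m := by omega
    simp only [Nat.add_sub_cancel] at hC
    obtain ⟨ww, hww⟩ := hC
    -- t is even
    have p1 : (2:ℤ) ^ m = 2 * 2 ^ (m-1) := by
      rw [← pow_succ']; congr 1; omega
    have p2 : (2:ℤ) ^ (m+1) = 2 * 2 ^ m := by rw [pow_succ]; ring
    have p3 : (2:ℤ) ^ (m-1) = 2 * 2 ^ (m-2) := by
      rw [← pow_succ']; congr 1; omega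
    have hteven : (2:ℤ) ∣ t := by
      have h1 : (2:ℤ) ^ (m+1) ∣ t * (2 ^ m) := by
        have hX : (2:ℤ) ^ (m+1) ∣ t * (r - (2 ^ m + 1)) :=
          ⟨t * ww, by linear_combination t * hww⟩
        have h2 := dvd_sub hdvd_t hX
        rwa [show t * (r - 1) - t * (r - (2 ^ m + 1)) = t * 2 ^ m by ring] at h2
      have h3 : (2:ℤ) ^ m * 2 ∣ 2 ^ m * t := by
        rw [show (2:ℤ) ^ m * 2 = 2 ^ (m+1) by rw [pow_succ], mul_comm ((2:ℤ)^m) t]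
        exact h1
      exact (mul_dvd_mul_iff_left (by positivity : ((2:ℤ) ^ m) ≠ 0)).mp h3
    obtain ⟨s, hs⟩ := hteven
    set W : ℤ := 2 ^ (m-1) + 1 + 2 ^ m * ww with hWdef
    have hWodd : Odd W := by
      refine ⟨2 ^ (m-2) + 2 ^ (m-1) * ww, ?_⟩
      rw [hWdef, p1, p3]; ring
    obtain ⟨j, hj⟩ := int_solve_odd (m := m) hWodd s
    obtain ⟨q, hq⟩ := hj
    -- y := x * a^j is a new involution
    have hy2 : (x * a ^ j) ^ 2 = 1 := by
      rw [hy2gen j]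
      have hexp : t + (j * r + j) = 2 ^ (m+1) * q := by
        linear_combination hs + 2 * hq + j * hww - 2 * j * hWdef + j * p1 + (j * ww - q) * p2
      rw [hexp, zpow_mul, hone, one_zpow]
    rcases hzu _ hy2 with h | h
    · exact hy_not j (by rw [h]; exact Subgroup.one_mem _)
    · exact hy_not j (by rw [h]; exact hzmem)
  · -- semidihedral case : contradiction
    exfalso
    have hm2 : 2 ≤ m := by omega
    simp only [Nat.add_sub_cancel] at hD
    obtain ⟨ww, hww⟩ := hD
    have p1 : (2:ℤ) ^ m = 2 * 2 ^ (m-1) := by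
      rw [← pow_succ']; congr 1; omega
    have p2 : (2:ℤ) ^ (m+1) = 2 * 2 ^ m := by rw [pow_succ]; ring
    have p3 : (2:ℤ) ^ (m-1) = 2 * 2 ^ (m-2) := by
      rw [← pow_succ']; congr 1; omega
    set W : ℤ := 2 ^ (m-1) - 1 + 2 ^ m * ww with hWdef
    have hWodd : Odd W := by
      refine ⟨2 ^ (m-2) - 1 + 2 ^ (m-1) * ww, ?_⟩
      rw [hWdef, p1, p3]; ring
    have hrW : r - 1 = 2 * W := by
      linear_combination hww - 2 * hWdef + p1 + ww * p2
    have htW : (2:ℤ) ^ m ∣ t := by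
      apply int_dvd_cancel_odd hWodd
      have h1 : (2:ℤ) ^ m * 2 ∣ (W * t) * 2 := by
        rw [show (2:ℤ)^m * 2 = 2^(m+1) by rw [pow_succ], show (W * t) * 2 = t * (r-1) by rw [hrW]; ring]
        exact hdvd_t
      exact (mul_dvd_mul_iff_right (by norm_num : (2:ℤ) ≠ 0)).mp h1
    obtain ⟨u, hu⟩ := htW
    have hxt : x ^ 2 = z ^ u := by
      rw [← ht, hu, zpow_mul, hwz']
    rcases Int.even_or_odd u with ⟨v, hv⟩ | ⟨v, hv⟩
    · apply hnotsq1
      rw [hxt, hv, ← two_mul, zpow_mul, hz2', one_zpow]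
    · -- x^2 = z ; then x * a is an involution
      have hxz : x ^ 2 = z := by
        rw [hxt, hv, zpow_add, zpow_mul, hz2', one_zpow, zpow_one, one_mul]
      have hy2 : (x * a ^ (1:ℤ)) ^ 2 = 1 := by
        rw [hy2gen 1]
        have hexp : t + (1 * r + 1) = 2 ^ (m+1) * (v + 1 + ww) := by
          linear_combination hu + 2 ^ m * hv + hww - (v + 1) * p2
        rw [hexp, zpow_mul, hone, one_zpow]
      rcases hzu _ hy2 with h | h
      · exact hy_not 1 (by rw [h]; exact Subgroup.one_mem _)
      · exact hy_not 1 (by rw [h]; exact hzmem)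


theorem quat_iso {a x : G} {m : ℕ} (hm : 1 ≤ m) (ho : orderOf a = 2 ^ (m+1))
    (hcard : Fintype.card G = 2 ^ (m+2)) (hxA : x ∉ Subgroup.zpowers a)
    (hinv : x * a * x⁻¹ = a⁻¹) (hxsq : x ^ 2 = a ^ (2 ^ m)) :
    Nonempty (G ≃* QuaternionGroup (2 ^ m)) := by
  classical
  set N : ℕ := 2 ^ m with hN
  haveI : NeZero N := ⟨by positivity⟩
  haveI : NeZero (2 * N) := ⟨by positivity⟩
  have horder2 : orderOf a = 2 * N := by
    rw [ho, hN, pow_succ']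
  have hpow : ∀ c d : ℕ, c % (2*N) = d % (2*N) → a ^ c = a ^ d := by
    intro c d h
    rw [← pow_mod_orderOf, horder2, h, ← horder2, pow_mod_orderOf]
  have hval2 : ∀ u v : ZMod (2*N), a ^ ((u + v).val) = a ^ (u.val + v.val) := by
    intro u v
    apply hpow
    rw [Nat.mod_eq_of_lt (ZMod.val_lt _), ZMod.val_add]
  have hxc : ∀ c : ℕ, x * a ^ c = (a ^ c)⁻¹ * x := by
    intro c
    have h1 : x * a ^ c * x⁻¹ = (a ^ c)⁻¹ := by
      rw [← conj_pow, hinv, inv_pow]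
    rw [← h1]; group
  have hcx : ∀ c : ℕ, a ^ c * x = x * (a ^ c)⁻¹ := by
    intro c
    calc a ^ c * x = a ^ c * (x * a ^ c) * (a ^ c)⁻¹ := by group
      _ = a ^ c * ((a ^ c)⁻¹ * x) * (a ^ c)⁻¹ := by rw [hxc]
      _ = x * (a ^ c)⁻¹ := by group
  have hx2N : x * x = a ^ N := by rw [← pow_two, hxsq]
  set f : QuaternionGroup N → G := fun q =>
    QuaternionGroup.rec (fun i => a ^ i.val) (fun i => x * a ^ i.val) q with hf
  have hfa : ∀ i : ZMod (2*N), f (QuaternionGroup.a i) = a ^ i.val := fun _ => rfl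
  have hfxa : ∀ i : ZMod (2*N), f (QuaternionGroup.xa i) = x * a ^ i.val := fun _ => rfl
  have hmul : ∀ u v : QuaternionGroup N, f (u * v) = f u * f v := by
    intro u v
    cases u with
    | a i =>
      cases v with
      | a j =>
        rw [QuaternionGroup.a_mul_a, hfa, hfa, hfa, ← pow_add]
        exact hval2 i j
      | xa j =>
        rw [QuaternionGroup.a_mul_xa, hfxa, hfa, hfxa, ← mul_assoc, hcx, mul_assoc]
        congr 1
        rw [eq_inv_mul_iff_mul_eq, ← pow_add, ← hval2,
          show i + (j - i) = j from by ring]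
    | xa i =>
      cases v with
      | a j =>
        rw [QuaternionGroup.xa_mul_a, hfxa, hfxa, hfa, mul_assoc, ← pow_add]
        congr 1
        exact hval2 i j
      | xa j =>
        rw [QuaternionGroup.xa_mul_xa, hfa, hfxa, hfxa]
        have hNval : ((N : ZMod (2*N))).val = N := ZMod.val_cast_of_lt (by
          have : 0 < N := Nat.pow_pos two_pos
          omega)
        have key2 : a ^ (((N : ZMod (2*N)) + j - i).val) * a ^ i.val
            = a ^ N * a ^ j.val := by
          rw [← pow_add, ← pow_add]
          have h1 : a ^ ((((N : ZMod (2*N)) + j - i)).val + i.val)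
              = a ^ ((((N : ZMod (2*N)) + j)).val) := by
            rw [← hval2, show ((N : ZMod (2*N)) + j - i) + i = (N : ZMod (2*N)) + j
              from by ring]
          rw [h1]
          apply hpow
          rw [Nat.mod_eq_of_lt (ZMod.val_lt _), ZMod.val_add, hNval]
        have hcomm : a ^ j.val * (a ^ i.val)⁻¹ = (a ^ i.val)⁻¹ * a ^ j.val :=
          ((Commute.pow_pow_self a j.val i.val).inv_right).eq
        calc a ^ (((N : ZMod (2*N)) + j - i).val)
            = a ^ N * a ^ j.val * (a ^ i.val)⁻¹ := eq_mul_inv_iff_mul_eq.mpr key2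
          _ = a ^ N * ((a ^ i.val)⁻¹ * a ^ j.val) := by rw [mul_assoc, hcomm]
          _ = (x * x) * ((a ^ i.val)⁻¹ * a ^ j.val) := by rw [hx2N]
          _ = x * ((a ^ i.val) * x) * a ^ j.val := by rw [hcx]; group
          _ = x * a ^ i.val * (x * a ^ j.val) := by group
  have hvalinj : ∀ i j : ZMod (2*N), a ^ i.val = a ^ j.val → i = j := by
    intro i j h
    have h1 := pow_eq_pow_iff_modEq.mp h
    rw [horder2] at h1
    have h2 : i.val = j.val := by
      have := h1
      unfold Nat.ModEq at this
      rwa [Nat.mod_eq_of_lt (ZMod.val_lt _), Nat.mod_eq_of_lt (ZMod.val_lt _)] at this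
    exact ZMod.val_injective _ h2
  have hnotx : ∀ i j : ZMod (2*N), a ^ i.val ≠ x * a ^ j.val := by
    intro i j h
    apply hxA
    refine Subgroup.mem_zpowers_iff.mpr ⟨(i.val : ℤ) - (j.val : ℤ), ?_⟩
    rw [zpow_sub, zpow_natCast, zpow_natCast, h]
    group
  have hinj : Function.Injective f := by
    intro u v huv
    cases u with
    | a i =>
      cases v with
      | a j => rw [hfa, hfa] at huv; rw [hvalinj i j huv]
      | xa j => exact absurd (by rw [← hfa, ← hfxa, huv]) (hnotx i j)
    | xa i =>
      cases v with
      | a j => exact absurd (by rw [← hfa, ← hfxa, ← huv]) (hnotx j i)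
      | xa j =>
        rw [hfxa, hfxa] at huv
        have := mul_left_cancel huv
        rw [hvalinj i j this]
  have hcards : Fintype.card (QuaternionGroup N) = Fintype.card G := by
    rw [QuaternionGroup.card, hcard, hN, pow_add]
    ring
  have hbij : Function.Bijective f :=
    (Fintype.bijective_iff_injective_and_card f).mpr ⟨hinj, hcards⟩
  exact ⟨(MulEquiv.ofBijective (MonoidHom.mk' f hmul) hbij).symm⟩


theorem isCyclic_of_comm_UI {n : ℕ} (hG : Fintype.card G = 2 ^ n)
    (hcomm : ∀ x y : G, x * y = y * x) {z : G} (hz : UI G z) : IsCyclic G := by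
  classical
  obtain ⟨hz1, hz2, hzu⟩ := hz
  have key : ∀ j : ℕ, (Finset.univ.filter fun a : G => a ^ (2 ^ j) = 1).card ≤ 2 ^ j := by
    intro j
    induction j with
    | zero =>
      have hsub : (Finset.univ.filter fun a : G => a ^ (2 ^ 0) = 1) ⊆ {1} := by
        intro a ha
        simp only [Finset.mem_filter, pow_zero, pow_one] at ha
        simp [ha.2]
      simpa using Finset.card_le_card hsub
    | succ j ih =>
      set s := Finset.univ.filter fun a : G => a ^ (2 ^ (j+1)) = 1 with hs
      set t := Finset.univ.filter fun a : G => a ^ (2 ^ j) = 1 with ht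
      have hmaps : ∀ a ∈ s, a ^ 2 ∈ t := by
        intro a ha
        simp only [hs, Finset.mem_filter] at ha
        simp only [ht, Finset.mem_filter]
        refine ⟨Finset.mem_univ _, ?_⟩
        rw [← pow_mul]
        rw [show 2 * 2 ^ j = 2 ^ (j+1) by rw [pow_succ']]
        exact ha.2
      have himage : s.image (fun a => a ^ 2) ⊆ t := by
        intro b hb
        obtain ⟨a, ha, rfl⟩ := Finset.mem_image.mp hb
        exact hmaps a ha
      have hfiber : ∀ b ∈ s.image (fun a => a ^ 2),
          (s.filter fun x => x ^ 2 = b).card ≤ 2 := by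
        intro b hb
        obtain ⟨y, hy, hyb⟩ := Finset.mem_image.mp hb
        have hsub : (s.filter fun x => x ^ 2 = b) ⊆ {y, z * y} := by
          intro x hx
          obtain ⟨hxs, hxb⟩ := Finset.mem_filter.mp hx
          have hxy : (x * y⁻¹) ^ 2 = 1 := by
            rw [(Commute.inv_right (hcomm x y : Commute x y)).mul_pow, inv_pow, hxb, ← hyb,
              mul_inv_cancel]
          rcases hzu _ hxy with h | h
          · have : x = y := by
              have := mul_eq_one_iff_eq_inv.mp h
              rw [this, inv_inv]
            simp [this]
          · have : x = z * y := by
              rw [← h, inv_mul_cancel_right]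
            simp [this]
        calc (s.filter fun x => x ^ 2 = b).card ≤ ({y, z * y} : Finset G).card :=
              Finset.card_le_card hsub
          _ ≤ 2 := Finset.card_insert_le _ _ |>.trans (by simp)
      calc s.card ≤ 2 * (s.image (fun a => a ^ 2)).card :=
            Finset.card_le_mul_card_image s 2 hfiber
        _ ≤ 2 * t.card := by
            have := Finset.card_le_card himage
            omega
        _ ≤ 2 * 2 ^ j := by omega
        _ = 2 ^ (j + 1) := by rw [pow_succ']
  apply isCyclic_of_card_pow_eq_one_le
  intro m hm
  have hdvd : Nat.gcd m (2 ^ n) ∣ 2 ^ n := Nat.gcd_dvd_right _ _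
  obtain ⟨j, hjn, hj⟩ := (Nat.dvd_prime_pow Nat.prime_two).mp hdvd
  have hsub : (Finset.univ.filter fun a : G => a ^ m = 1) ⊆
      (Finset.univ.filter fun a : G => a ^ (2 ^ j) = 1) := by
    intro a ha
    simp only [Finset.mem_filter] at ha ⊢
    refine ⟨Finset.mem_univ _, ?_⟩
    have h1 : orderOf a ∣ m := orderOf_dvd_of_pow_eq_one ha.2
    have h2 : orderOf a ∣ 2 ^ n := by rw [← hG]; exact orderOf_dvd_card
    have h3 : orderOf a ∣ 2 ^ j := by rw [← hj]; exact Nat.dvd_gcd h1 h2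
    exact orderOf_dvd_iff_pow_eq_one.mp h3
  have h2jm : 2 ^ j ≤ m := by
    rw [← hj]
    exact Nat.le_of_dvd hm (Nat.gcd_dvd_left _ _)
  calc (Finset.univ.filter fun a : G => a ^ m = 1).card
      ≤ (Finset.univ.filter fun a : G => a ^ (2 ^ j) = 1).card := Finset.card_le_card hsub
    _ ≤ 2 ^ j := key j
    _ ≤ m := h2jm


theorem classify {n : ℕ} (hn : 1 ≤ n) (hG : Fintype.card G = 2 ^ n) {z : G} (hz : UI G z) :
    IsCyclic G ∨ ∃ m : ℕ, Nonempty (G ≃* QuaternionGroup (2 ^ m)) := by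
  classical
  obtain ⟨hz1, hz2, hzu⟩ := hz
  -- z is central
  have hzcen : ∀ g : G, g * z = z * g := by
    intro g
    have h1 : (g * z * g⁻¹) ^ 2 = 1 := by
      rw [conj_pow, hz2, mul_one, mul_inv_cancel]
    have h2 : g * z * g⁻¹ ≠ 1 := by
      intro hc
      apply hz1
      have h3 : z = g⁻¹ * (g * z * g⁻¹) * g := by group
      rw [hc] at h3
      simpa using h3
    rcases hzu _ h1 with h | h
    · exact absurd h h2
    · calc g * z = (g * z * g⁻¹) * g := by group
        _ = z * g := by rw [h]
  -- maximal abelian normal subgroup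
  set S : Set (Subgroup G) := {B | B.Normal ∧ ∀ x ∈ B, ∀ y ∈ B, x * y = y * x} with hSdef
  have hSne : S.Nonempty := by
    refine ⟨⊥, inferInstance, ?_⟩
    intro x hx y hy
    rw [Subgroup.mem_bot] at hx hy
    rw [hx, hy]
  obtain ⟨A, hAS, hAmax⟩ :=
    Set.Finite.exists_maximalFor (fun B : Subgroup G => Nat.card B) S (Set.toFinite S) hSne
  have hAnormal : A.Normal := hAS.1
  haveI := hAnormal
  have hAcomm : ∀ x ∈ A, ∀ y ∈ A, x * y = y * x := hAS.2
  have hAmax' : ∀ B ∈ S, A ≤ B → B = A := by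
    intro B hBS hAB
    have hle : Nat.card A ≤ Nat.card B := Subgroup.card_le_of_le hAB
    have heq := hAmax hBS hle
    exact (Subgroup.eq_of_le_of_card_ge hAB heq.ge).symm
  -- centralizer of A
  set C : Subgroup G := Subgroup.centralizer (A : Set G) with hCdef
  have hAleC : A ≤ C := by
    intro x hx
    exact Subgroup.mem_centralizer_iff.mpr (fun y hy => hAcomm y hy x hx)
  have hCnormal : C.Normal := by
    constructor
    intro c hc g
    rw [hCdef, Subgroup.mem_centralizer_iff] at hc ⊢
    intro y hy
    have hy' : g⁻¹ * y * g ∈ A := by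
      have h1 := hAnormal.conj_mem y hy g⁻¹
      simpa using h1
    have hcy := hc _ hy'
    calc y * (g * c * g⁻¹) = g * ((g⁻¹ * y * g) * c) * g⁻¹ := by group
      _ = g * (c * (g⁻¹ * y * g)) * g⁻¹ := by rw [hcy]
      _ = (g * c * g⁻¹) * y := by group
  -- C = A
  have hCA : C = A := by
    by_contra hne'
    have hALTC : A < C := lt_of_le_of_ne hAleC (Ne.symm hne')
    obtain ⟨c, hcC, hcA⟩ := SetLike.exists_of_lt hALTC
    set π : G →* G ⧸ A := QuotientGroup.mk' A with hπ
    set C' : Subgroup (G ⧸ A) := C.map π with hC'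
    haveI hC'norm : C'.Normal := Subgroup.Normal.map hCnormal π (QuotientGroup.mk'_surjective A)
    have hGpg : IsPGroup 2 G := IsPGroup.of_card (by rw [Nat.card_eq_fintype_card, hG])
    have hQpg : IsPGroup 2 (G ⧸ A) := IsPGroup.to_quotient hGpg A
    have hCApg : IsPGroup 2 (ConjAct (G ⧸ A)) := fun g => by
      obtain ⟨k, hk⟩ := hQpg (ConjAct.ofConjAct g)
      exact ⟨k, ConjAct.ofConjAct.injective (by rw [map_pow, hk, map_one])⟩
    have hc'1 : π c ∈ C' := ⟨c, hcC, rfl⟩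
    have hc'ne : π c ≠ 1 := by
      rw [hπ, Ne, QuotientGroup.mk'_apply, QuotientGroup.eq_one_iff]
      exact hcA
    haveI : Fact (Nat.Prime 2) := ⟨Nat.prime_two⟩
    have hCard' : 2 ∣ Nat.card C' := by
      obtain ⟨j, hj⟩ := IsPGroup.iff_card.mp (IsPGroup.to_subgroup hQpg C')
      haveI : Nontrivial ↥C' := ⟨⟨1, Subgroup.one_mem _⟩, ⟨π c, hc'1⟩,
        fun hcon => hc'ne (congrArg Subtype.val hcon).symm⟩
      have h1 : 1 < Nat.card ↥C' := Finite.one_lt_card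
      rw [hj] at h1 ⊢
      have hj1 : 1 ≤ j := by
        rcases Nat.eq_zero_or_pos j with rfl | h
        · simp at h1
        · exact h
      exact dvd_pow_self 2 (by omega)
    have hfix1 : (1 : ↥C') ∈ MulAction.fixedPoints (ConjAct (G ⧸ A)) ↥C' :=
      MulAction.mem_fixedPoints.mpr (fun g => smul_one g)
    obtain ⟨b, hbfix, hbne⟩ :=
      IsPGroup.exists_fixed_point_of_prime_dvd_card_of_fixed_point hCApg ↥C' hCard' hfix1
    have hbcen : ∀ q : G ⧸ A, q * (b : G ⧸ A) * q⁻¹ = (b : G ⧸ A) := by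
      intro q
      have h1 := MulAction.mem_fixedPoints.mp hbfix (ConjAct.toConjAct q)
      have h2 := congrArg Subtype.val h1
      rw [ConjAct.Subgroup.val_conj_smul, ConjAct.toConjAct_smul] at h2
      exact h2
    obtain ⟨c0, hc0C, hc0b⟩ := Subgroup.mem_map.mp b.2
    have hc0A : c0 ∉ A := by
      intro h
      apply hbne
      apply Subtype.ext
      rw [← hc0b]
      exact ((QuotientGroup.eq_one_iff c0).mpr h).symm
    have hc0comm : ∀ y ∈ A, c0 * y = y * c0 := by
      intro y hy
      exact (Subgroup.mem_centralizer_iff.mp hc0C y hy).symm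
    set B : Subgroup G := Subgroup.zpowers c0 ⊔ A with hBdef
    have hmemB : ∀ g ∈ B, ∃ i : ℤ, ∃ y ∈ A, g = c0 ^ i * y := by
      intro g hg
      have h1 : g ∈ (↑(Subgroup.zpowers c0 ⊔ A) : Set G) := hg
      rw [Subgroup.mul_normal] at h1
      obtain ⟨h, hh, y, hy, hprod⟩ := h1
      obtain ⟨i, hi⟩ := Subgroup.mem_zpowers_iff.mp hh
      exact ⟨i, y, hy, by rw [← hprod, ← hi]⟩
    have hBS : B ∈ S := by
      constructor
      · constructor
        intro g hg k
        obtain ⟨i, y, hy, rfl⟩ := hmemB g hg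
        have hky : k * y * k⁻¹ ∈ A := hAnormal.conj_mem y hy k
        have hd : c0⁻¹ * (k * c0 * k⁻¹) ∈ A := by
          have h3 : π (c0⁻¹ * (k * c0 * k⁻¹)) = 1 := by
            rw [map_mul, map_inv, map_mul, map_mul, map_inv, hc0b, hbcen (π k)]
            exact inv_mul_cancel _
          rw [hπ, QuotientGroup.mk'_apply, QuotientGroup.eq_one_iff] at h3
          exact h3
        have hkc0 : k * c0 * k⁻¹ = c0 * (c0⁻¹ * (k * c0 * k⁻¹)) := by group
        have hcd : Commute c0 (c0⁻¹ * (k * c0 * k⁻¹)) := hc0comm _ hd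
        have hkc0i : k * c0 ^ i * k⁻¹ = c0 ^ i * (c0⁻¹ * (k * c0 * k⁻¹)) ^ i := by
          have h4 : k * c0 ^ i * k⁻¹ = (k * c0 * k⁻¹) ^ i := conj_zpow.symm
          rw [h4, hkc0, hcd.mul_zpow]
          rw [← hkc0]
        have h5 : k * (c0 ^ i * y) * k⁻¹
            = (c0 ^ i) * ((c0⁻¹ * (k * c0 * k⁻¹)) ^ i * (k * y * k⁻¹)) := by
          calc k * (c0 ^ i * y) * k⁻¹ = (k * c0 ^ i * k⁻¹) * (k * y * k⁻¹) := by group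
            _ = (c0 ^ i * (c0⁻¹ * (k * c0 * k⁻¹)) ^ i) * (k * y * k⁻¹) := by rw [hkc0i]
            _ = _ := by group
        rw [h5]
        apply Subgroup.mul_mem
        · exact Subgroup.mem_sup_left (Subgroup.zpow_mem _ (Subgroup.mem_zpowers c0) i)
        · exact Subgroup.mem_sup_right (Subgroup.mul_mem _ (Subgroup.zpow_mem _ hd i) hky)
      · intro g1 hg1 g2 hg2
        obtain ⟨i1, y1, hy1, rfl⟩ := hmemB g1 hg1
        obtain ⟨i2, y2, hy2, rfl⟩ := hmemB g2 hg2
        have hcy1 : Commute c0 y1 := hc0comm y1 hy1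
        have hcy2 : Commute c0 y2 := hc0comm y2 hy2
        have h12 : Commute y1 y2 := hAcomm y1 hy1 y2 hy2
        have hfull : Commute (c0 ^ i1 * y1) (c0 ^ i2 * y2) := by
          apply Commute.mul_left
          · apply Commute.mul_right
            · exact (Commute.refl c0).zpow_zpow i1 i2
            · exact hcy2.zpow_left i1
          · apply Commute.mul_right
            · exact (hcy1.symm).zpow_right i2
            · exact h12
        exact hfull.eq
    have hcB : c0 ∈ B := Subgroup.mem_sup_left (Subgroup.mem_zpowers c0)
    have hBA := hAmax' B hBS le_sup_right
    rw [hBA] at hcB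
    exact hc0A hcB
  -- z lies in A
  have hzA : z ∈ A := by
    rw [← hCA]
    exact Subgroup.mem_centralizer_iff.mpr (fun y _ => hzcen y)
  -- A is cyclic
  haveI : Fintype ↥A := Fintype.ofFinite ↥A
  obtain ⟨kA, hkA⟩ : ∃ k, Fintype.card ↥A = 2 ^ k := by
    have h1 : Nat.card ↥A ∣ 2 ^ n := by
      rw [← hG, ← Nat.card_eq_fintype_card]
      exact Subgroup.card_subgroup_dvd_card A
    rw [Nat.card_eq_fintype_card] at h1
    obtain ⟨k, _, hk⟩ := (Nat.dvd_prime_pow Nat.prime_two).mp h1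
    exact ⟨k, hk⟩
  have hUIA : UI ↥A ⟨z, hzA⟩ := by
    refine ⟨?_, ?_, ?_⟩
    · intro hcq
      exact hz1 (congrArg Subtype.val hcq)
    · apply Subtype.ext
      simpa using hz2
    · rintro ⟨x, hxA⟩ hx2
      have h1 : x ^ 2 = 1 := by simpa using congrArg Subtype.val hx2
      rcases hzu x h1 with h | h
      · left; exact Subtype.ext h
      · right; exact Subtype.ext h
  have hAcyc : IsCyclic ↥A :=
    isCyclic_of_comm_UI hkA (fun u v => Subtype.ext (hAcomm u.1 u.2 v.1 v.2)) hUIA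
  obtain ⟨gA, hgA⟩ := hAcyc
  have hgA' : ∀ u : ↥A, u ∈ Subgroup.zpowers gA := fun u => hgA u
  set a : G := (gA : G) with hadef
  have horda : orderOf a = 2 ^ kA := by
    have h1 : orderOf a = orderOf gA := orderOf_injective A.subtype Subtype.val_injective gA
    rw [h1, orderOf_eq_card_of_forall_mem_zpowers hgA', Nat.card_eq_fintype_card, hkA]
  have hAzp : A = Subgroup.zpowers a := by
    apply le_antisymm
    · intro u hu
      obtain ⟨i, hi⟩ := Subgroup.mem_zpowers_iff.mp (hgA' ⟨u, hu⟩)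
      refine Subgroup.mem_zpowers_iff.mpr ⟨i, ?_⟩
      have h2 := congrArg Subtype.val hi
      simpa using h2
    · rw [Subgroup.zpowers_le]
      exact gA.2
  have haA : a ∈ A := gA.2
  -- counting
  have hcardprod : Nat.card (G ⧸ A) * Nat.card ↥A = Nat.card G :=
    (Subgroup.card_eq_card_quotient_mul_card_subgroup A).symm
  obtain ⟨jQ, hjQ⟩ : ∃ j, Nat.card (G ⧸ A) = 2 ^ j := by
    have h1 : Nat.card (G ⧸ A) ∣ 2 ^ n := by
      rw [← hG, ← Nat.card_eq_fintype_card]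
      exact Dvd.intro _ hcardprod
    obtain ⟨j, _, hj⟩ := (Nat.dvd_prime_pow Nat.prime_two).mp h1
    exact ⟨j, hj⟩
  have hsum : jQ + kA = n := by
    have h1 : (2:ℕ) ^ (jQ + kA) = 2 ^ n := by
      rw [pow_add, ← hjQ, ← hkA, ← Nat.card_eq_fintype_card (α := ↥A), hcardprod,
        Nat.card_eq_fintype_card, hG]
    exact Nat.pow_right_injective (le_refl 2) h1
  -- if kA ≤ 1 then A = ⊤
  have hkA2 : kA ≤ 1 → A = ⊤ := by
    intro hk1
    have hcen : ∀ y ∈ A, ∀ g : G, y * g = g * y := by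
      intro y hy g
      have hy2 : y ^ 2 = 1 := by
        have h1 : (⟨y, hy⟩ : ↥A) ^ (Fintype.card ↥A) = 1 := pow_card_eq_one
        have h2 : y ^ (2 ^ kA) = 1 := by
          rw [hkA] at h1
          simpa using congrArg Subtype.val h1
        interval_cases kA
        · rw [pow_zero, pow_one] at h2
          rw [h2, one_pow]
        · simpa using h2
      rcases hzu y hy2 with rfl | rfl
      · rw [one_mul, mul_one]
      · exact (hzcen g).symm
    have htop : ⊤ ≤ C := by
      intro g _
      exact Subgroup.mem_centralizer_iff.mpr (fun y hy => hcen y hy g)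
    rw [← hCA]
    exact le_antisymm le_top htop
  by_cases hA_top : A = ⊤
  · left
    refine ⟨a, fun x => ?_⟩
    have hxA : x ∈ A := by rw [hA_top]; trivial
    rwa [hAzp] at hxA
  · have hkA2' : 2 ≤ kA := by
      by_contra h
      exact hA_top (hkA2 (by omega))
    obtain ⟨m, hmk⟩ : ∃ m, kA = m + 1 := ⟨kA - 1, by omega⟩
    have hm : 1 ≤ m := by omega
    have hnc : ∀ x : G, x ∉ A → x * a ≠ a * x := by
      intro x hx hcomm
      apply hx
      rw [← hCA]
      apply Subgroup.mem_centralizer_iff.mpr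
      intro y hy
      rw [hAzp] at hy
      obtain ⟨i, hi⟩ := Subgroup.mem_zpowers_iff.mp hy
      rw [← hi]
      have hC : Commute x a := hcomm
      exact ((hC.zpow_right i).symm).eq
    have hjQ1 : 1 ≤ jQ := by
      by_contra h
      have hj0 : jQ = 0 := by omega
      apply hA_top
      apply Subgroup.eq_top_of_card_eq
      have hkn : kA = n := by omega
      rw [Nat.card_eq_fintype_card, Nat.card_eq_fintype_card, hkA, hG, hkn]
    have hUI' : UI G z := ⟨hz1, hz2, hzu⟩
    have hordm : orderOf a = 2 ^ (m + 1) := by rw [horda, hmk]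
    have hconj_mem : ∀ x : G, x * a * x⁻¹ ∈ Subgroup.zpowers a := by
      intro x
      rw [← hAzp]
      exact hAnormal.conj_mem a haA x
    by_cases hjQcase : jQ = 1
    · -- quaternion
      right
      obtain ⟨x, hx⟩ : ∃ x : G, x ∉ A := by
        by_contra h
        push_neg at h
        exact hA_top ((Subgroup.eq_top_iff' A).mpr h)
      have hx2A : x ^ 2 ∈ A := by
        have h1 : ((QuotientGroup.mk' A) x) ^ 2 = 1 := by
          have h2 : orderOf ((QuotientGroup.mk' A) x) ∣ 2 := by
            have h3 := orderOf_dvd_natCard ((QuotientGroup.mk' A) x)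
            rwa [hjQ, hjQcase, pow_one] at h3
          exact orderOf_dvd_iff_pow_eq_one.mp h2
        rw [← map_pow, QuotientGroup.mk'_apply, QuotientGroup.eq_one_iff] at h1
        exact h1
      obtain ⟨hxinv, hxsq⟩ := core hUI' hm hordm
        (by rw [← hAzp]; exact hx) (by rw [← hAzp]; exact hx2A)
        (hconj_mem x) (hnc x hx)
      refine ⟨m, quat_iso hm hordm ?_ (by rw [← hAzp]; exact hx) hxinv hxsq⟩
      rw [hG]
      congr 1
      omega
    · exfalso
      have hjQ2 : 2 ≤ jQ := by omega
      have hinv_all : ∀ x : G, x ∉ A → x ^ 2 ∈ A → x * a * x⁻¹ = a⁻¹ := by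
        intro x hx hx2
        exact (core hUI' hm hordm (by rw [← hAzp]; exact hx)
          (by rw [← hAzp]; exact hx2) (hconj_mem x) (hnc x hx)).1
      have honeinv : ∀ q1 q2 : G ⧸ A, q1 ≠ 1 → q2 ≠ 1 → q1 ^ 2 = 1 → q2 ^ 2 = 1 →
          q1 = q2 := by
        intro q1 q2 h1 h2 hs1 hs2
        obtain ⟨x1, rfl⟩ := QuotientGroup.mk'_surjective A q1
        obtain ⟨x2, rfl⟩ := QuotientGroup.mk'_surjective A q2
        have hx1A : x1 ∉ A := by
          intro hc
          exact h1 (by rwa [QuotientGroup.mk'_apply, QuotientGroup.eq_one_iff])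
        have hx2A : x2 ∉ A := by
          intro hc
          exact h2 (by rwa [QuotientGroup.mk'_apply, QuotientGroup.eq_one_iff])
        have hs1' : x1 ^ 2 ∈ A := by
          rw [← QuotientGroup.eq_one_iff (x1 ^ 2), ← QuotientGroup.mk'_apply, map_pow]
          exact hs1
        have hs2' : x2 ^ 2 ∈ A := by
          rw [← QuotientGroup.eq_one_iff (x2 ^ 2), ← QuotientGroup.mk'_apply, map_pow]
          exact hs2
        have e1 := hinv_all x1 hx1A hs1'
        have e2 := hinv_all x2 hx2A hs2'
        have hcomm : (x2⁻¹ * x1) * a = a * (x2⁻¹ * x1) := by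
          have h3 : x1 * a * x1⁻¹ = x2 * a * x2⁻¹ := by rw [e1, e2]
          calc (x2⁻¹ * x1) * a = x2⁻¹ * (x1 * a * x1⁻¹) * x1 := by group
            _ = x2⁻¹ * (x2 * a * x2⁻¹) * x1 := by rw [h3]
            _ = a * (x2⁻¹ * x1) := by group
        have hmem : x2⁻¹ * x1 ∈ A := by
          by_contra hmem'
          exact hnc _ hmem' hcomm
        have hmem2 : x1⁻¹ * x2 ∈ A := by
          have := A.inv_mem hmem
          simpa using this
        rw [QuotientGroup.mk'_apply, QuotientGroup.mk'_apply]
        exact QuotientGroup.eq.mpr hmem2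
      haveI : Fact (Nat.Prime 2) := ⟨Nat.prime_two⟩
      obtain ⟨V, hV⟩ := Sylow.exists_subgroup_card_pow_prime 2
        (show 2 ^ 2 ∣ Nat.card (G ⧸ A) by rw [hjQ]; exact pow_dvd_pow 2 hjQ2)
      by_cases hV4 : ∃ v : ↥V, ((v : G ⧸ A)) ^ 2 ≠ 1
      · obtain ⟨v, hv⟩ := hV4
        have hv4 : ((v : G ⧸ A)) ^ 4 = 1 := by
          have h5 : orderOf (v : G ⧸ A) ∣ 4 := by
            have h6 : orderOf v ∣ 4 := by
              have h7 := orderOf_dvd_natCard v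
              rwa [hV] at h7
            have h8 : orderOf (v : G ⧸ A) = orderOf v :=
              orderOf_injective V.subtype Subtype.val_injective v
            rwa [h8]
          exact orderOf_dvd_iff_pow_eq_one.mp h5
        obtain ⟨x, hxq⟩ := QuotientGroup.mk'_surjective A (v : G ⧸ A)
        have hyA : x * x ∉ A := by
          intro h
          apply hv
          rw [← hxq, ← map_pow, pow_two, QuotientGroup.mk'_apply,
            QuotientGroup.eq_one_iff]
          exact h
        have hy2A : (x * x) ^ 2 ∈ A := by
          rw [← QuotientGroup.eq_one_iff ((x*x) ^ 2), ← QuotientGroup.mk'_apply, map_pow]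
          have : (QuotientGroup.mk' A) (x * x) = ((v : G ⧸ A)) ^ 2 := by
            rw [← hxq, ← map_pow, pow_two]
          rw [this, ← pow_mul]
          exact hv4
        have hyinv := hinv_all (x * x) hyA hy2A
        obtain ⟨s, hs⟩ := Subgroup.mem_zpowers_iff.mp (hconj_mem x)
        have h6 : a ^ (s * s) = a⁻¹ := by
          rw [← hyinv]
          calc a ^ (s * s) = (a ^ s) ^ s := by rw [zpow_mul]
            _ = (x * a * x⁻¹) ^ s := by rw [hs]
            _ = x * a ^ s * x⁻¹ := conj_zpow
            _ = x * (x * a * x⁻¹) * x⁻¹ := by rw [hs]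
            _ = (x * x) * a * (x * x)⁻¹ := by group
        have h7 : (2:ℤ) ^ (m+1) ∣ (s * s + 1) := by
          have h8 : a ^ (s * s) = a ^ (-1 : ℤ) := by rw [h6, zpow_neg_one]
          have h9 := zpow_eq_zpow_iff_modEq.mp h8
          have h10 := Int.ModEq.dvd h9
          rw [hordm] at h10
          push_cast at h10
          have h12 := dvd_neg.mpr h10
          rwa [show -(-1 - s * s) = s * s + 1 by ring] at h12
        have h8 : (4:ℤ) ∣ s * s + 1 := by
          refine dvd_trans ?_ h7
          rw [show (4:ℤ) = 2 ^ 2 by norm_num]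
          exact pow_dvd_pow 2 (by omega)
        obtain ⟨d, hd⟩ := h8
        rcases Int.even_or_odd s with ⟨c, hcc⟩ | ⟨c, hcc⟩
        · have h9 : (4:ℤ) ∣ 1 := ⟨d - c * c, by rw [hcc] at hd; linarith⟩
          norm_num at h9
        · have h9 : (4:ℤ) ∣ 2 := ⟨d - (c * c + c), by rw [hcc] at hd; linarith⟩
          norm_num at h9
      · push_neg at hV4
        haveI hVnt : Nontrivial ↥V := by
          apply Finite.one_lt_card_iff_nontrivial.mp
          rw [hV]
          omega
        obtain ⟨v0, hv0⟩ := exists_ne (1 : ↥V)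
        have hall : ∀ v : ↥V, (v : G ⧸ A) = 1 ∨ (v : G ⧸ A) = (v0 : G ⧸ A) := by
          intro v
          by_cases h1 : (v : G ⧸ A) = 1
          · exact Or.inl h1
          · right
            refine honeinv _ _ h1 ?_ (hV4 v) (hV4 v0)
            intro hc
            exact hv0 (by
              apply Subtype.ext
              simpa using hc)
        have hsub : (Finset.univ.image (fun v : ↥V => (v : G ⧸ A)))
            ⊆ {1, (v0 : G ⧸ A)} := by
          intro q hq
          obtain ⟨v, _, rfl⟩ := Finset.mem_image.mp hq
          rcases hall v with h | h <;> simp [h]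
        have hcard_le := Finset.card_le_card hsub
        rw [Finset.card_image_of_injective _ Subtype.val_injective] at hcard_le
        have h2 : ({1, (v0 : G ⧸ A)} : Finset (G ⧸ A)).card ≤ 2 :=
          (Finset.card_insert_le _ _).trans (by simp)
        have h4 : Nat.card ↥V = 4 := hV
        rw [Nat.card_eq_fintype_card, ← Finset.card_univ] at h4
        omega

end PM

namespace PM

theorem UI_quaternion (N : ℕ) (hN : 0 < N) :
    ∃ z : QuaternionGroup N, UI (QuaternionGroup N) z := by
  haveI : NeZero N := ⟨hN.ne'⟩
  haveI : NeZero (2 * N) := ⟨by omega⟩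
  have haN : ((N : ZMod (2 * N))) ≠ 0 := by
    rw [Ne, ZMod.natCast_eq_zero_iff]
    intro hdvd
    have := Nat.le_of_dvd hN hdvd
    omega
  have hNN : ((N : ZMod (2 * N))) + N = 0 := by
    rw [← Nat.cast_add, ZMod.natCast_eq_zero_iff]
    exact ⟨1, by ring⟩
  refine ⟨.a (N : ZMod (2 * N)), ?_, ?_, ?_⟩
  · intro h
    rw [QuaternionGroup.one_def] at h
    injection h with h'
    exact haN h'
  · rw [pow_two, QuaternionGroup.a_mul_a, hNN, QuaternionGroup.one_def]
  · intro x hx2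
    cases x with
    | a i =>
      rw [pow_two, QuaternionGroup.a_mul_a, QuaternionGroup.one_def] at hx2
      injection hx2 with h'
      have hv : (i + i).val = 0 := by rw [h']; exact ZMod.val_zero
      rw [ZMod.val_add] at hv
      have hdvd : 2 * N ∣ i.val + i.val := Nat.dvd_of_mod_eq_zero hv
      obtain ⟨c, hc⟩ := hdvd
      have hlt : i.val < 2 * N := ZMod.val_lt i
      have hc2 : c < 2 := by nlinarith
      have hval : i.val = 0 ∨ i.val = N := by
        interval_cases c <;> omega
      rcases hval with hval | hval
      · left
        rw [QuaternionGroup.one_def]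
        congr 1
        rw [← ZMod.natCast_zmod_val i, hval, Nat.cast_zero]
      · right
        congr 1
        rw [← ZMod.natCast_zmod_val i, hval]
    | xa i =>
      rw [QuaternionGroup.xa_sq, QuaternionGroup.one_def] at hx2
      injection hx2 with h'
      exact absurd h' haN

end PM

theorem stmt18 (G : Type*) [Group G] [Fintype G] (n : ℕ) (hn : 1 ≤ n)
    (h : Fintype.card G = 2 ^ n) :
    hasPerfectMatching (powerGraph G) ↔
      (IsCyclic G ∨ ∃ m : ℕ, Nonempty (G ≃* QuaternionGroup (2 ^ m))) := by
  constructor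
  · intro hpm
    obtain ⟨z, hz⟩ := PM.UI_of_PM hn h hpm
    exact PM.classify hn h hz
  · intro hrhs
    rcases hrhs with hc | ⟨m, ⟨e⟩⟩
    · obtain ⟨z, hz⟩ := PM.UI_of_isCyclic hn hc h
      exact PM.hasPM_of_UI hz
    · obtain ⟨zq, hzq⟩ := PM.UI_quaternion (2 ^ m) (by positivity)
      exact PM.hasPM_of_UI (PM.UI_transfer e.symm hzq)
end
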